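/- arXiv:1212.4099 — 6 statements merged into one kernel-verified Lean document; each statement's English description precedes it below -/
import Mathlib

section
/- Let (X, 𝒜, μ, T) be an exact measure-preserving system on a σ-finite measure space with μ(X) = ∞ (exactness: ⋂_{n≥0} T⁻ⁿ𝒜 is trivial mod μ). Then for every F ∈ L^∞(μ) and every g ∈ L¹(μ) with ∫ g dμ = 0, one has lim_{n→∞} ∫_X (F∘Tⁿ)·g dμ = 0. -/
open MeasureTheory Filter Topology

open scoped ENNReal NNReal RealInnerProductSpace

section setup
variable {X : Type*} [m : MeasurableSpace X] (μ : Measure X) [SigmaFinite μ]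
  {T : X → X}

lemma comap_le_of_measurable (hT : Measurable T) (n : ℕ) :
    MeasurableSpace.comap (T^[n]) m ≤ m :=
  measurable_iff_comap_le.mp (hT.iterate n)

lemma comap_antitone (hT : Measurable T) {n k : ℕ} (hnk : n ≤ k) :
    MeasurableSpace.comap (T^[k]) m ≤ MeasurableSpace.comap (T^[n]) m := by
  have : T^[k] = T^[k-n] ∘ T^[n] := by
    funext x; rw [Function.comp_apply, ← Function.iterate_add_apply, Nat.sub_add_cancel hnk]
  rw [this, ← MeasurableSpace.comap_comp]
  exact MeasurableSpace.comap_mono (measurable_iff_comap_le.mp (hT.iterate (k-n)))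

lemma sigmaFinite_trim_comap (hT : MeasurePreserving T μ μ) (n : ℕ) :
    SigmaFinite (μ.trim (comap_le_of_measurable hT.measurable n)) := by
  refine Measure.FiniteSpanningSetsIn.sigmaFinite
    (C := Set.univ) ⟨fun k => T^[n] ⁻¹' (spanningSets μ k), fun _ => trivial, ?_, ?_⟩
  · intro k
    have hms : MeasurableSet[MeasurableSpace.comap (T^[n]) m] (T^[n] ⁻¹' (spanningSets μ k)) :=
      ⟨spanningSets μ k, measurableSet_spanningSets μ k, rfl⟩
    rw [trim_measurableSet_eq _ hms,
      (hT.iterate n).measure_preimage (measurableSet_spanningSets μ k).nullMeasurableSet]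
    exact measure_spanningSets_lt_top μ k
  · rw [← Set.preimage_iUnion, iUnion_spanningSets, Set.preimage_univ]
end setup

lemma ultra_tendsto_limUnder {u : ℕ → ℝ} {M : ℝ} (hb : ∀ n, |u n| ≤ M) (𝒰 : Ultrafilter ℕ) :
    Tendsto u 𝒰 (𝓝 (limUnder 𝒰 u)) := by
  have hle : (𝒰 : Filter ℕ).map u ≤ 𝓟 (Set.Icc (-M) M) := by
    rw [le_principal_iff, mem_map]
    exact Filter.univ_mem' (fun (n : ℕ) => Set.mem_Icc.mpr (abs_le.mp (hb n)))
  obtain ⟨x, -, hx⟩ := isCompact_Icc.ultrafilter_le_nhds (𝒰.map u) hle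
  have hx' : Tendsto u 𝒰 (𝓝 x) := hx
  rwa [hx'.limUnder_eq]

lemma bdd_mul_integrable {X : Type*} [m : MeasurableSpace X] {μ : Measure X}
    {φ f : X → ℝ} (hφ : Measurable φ) {C : ℝ} (hC : ∀ x, |φ x| ≤ C)
    (hf : Integrable f μ) : Integrable (fun x => φ x * f x) μ :=
  hf.bdd_mul hφ.aestronglyMeasurable (Filter.Eventually.of_forall fun x => by rw [Real.norm_eq_abs]; exact hC x)

lemma abs_integral_bdd_mul_le {X : Type*} [m : MeasurableSpace X] {μ : Measure X}
    {φ f : X → ℝ} (hφ : Measurable φ) {C : ℝ} (hC : ∀ x, |φ x| ≤ C) (hC0 : 0 ≤ C)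
    (hf : Integrable f μ) : |∫ x, φ x * f x ∂μ| ≤ C * ∫ x, |f x| ∂μ := by
  calc |∫ x, φ x * f x ∂μ| ≤ ∫ x, |φ x * f x| ∂μ := by
        simpa only [Real.norm_eq_abs] using
          norm_integral_le_integral_norm (fun x => φ x * f x) (μ := μ)
    _ ≤ ∫ x, C * |f x| ∂μ := by
        refine integral_mono (bdd_mul_integrable hφ hC hf).abs (hf.abs.const_mul C) ?_
        intro x
        show |φ x * f x| ≤ C * |f x|
        rw [abs_mul]
        exact mul_le_mul_of_nonneg_right (hC x) (abs_nonneg _)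
    _ = C * ∫ x, |f x| ∂μ := integral_const_mul C _

section
variable {X : Type*} [m : MeasurableSpace X] {μ : Measure X}

lemma indicator_ae_congr {E : Set X} (hE : MeasurableSet E) {f g : X → ℝ}
    (h : f =ᵐ[μ.restrict E] g) : E.indicator f =ᵐ[μ] E.indicator g := by
  have h' := (ae_restrict_iff' hE).mp h
  filter_upwards [h'] with x hx
  by_cases hxE : x ∈ E
  · simp [Set.indicator_of_mem hxE, hx hxE]
  · simp [Set.indicator_of_notMem hxE]

lemma memL2_indicator_integrable {E : Set X} (hE : MeasurableSet E) (hEfin : μ E < ⊤)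
    {f : X → ℝ} (hf : MemLp f 2 (μ.restrict E)) : Integrable (E.indicator f) μ := by
  haveI : IsFiniteMeasure (μ.restrict E) :=
    ⟨by rw [Measure.restrict_apply_univ]; exact hEfin⟩
  have : Integrable f (μ.restrict E) := hf.integrable one_le_two
  exact (integrable_indicator_iff hE).mpr this

lemma integral_abs_le_sqrt_L2 {ν : Measure X} [IsFiniteMeasure ν] {f : X → ℝ}
    (hf : MemLp f 2 ν) :
    ∫ x, |f x| ∂ν ≤ ((ν Set.univ) ^ (2⁻¹ : ℝ)).toReal * (eLpNorm f 2 ν).toReal := by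
  have h1 := eLpNorm_le_eLpNorm_mul_rpow_measure_univ (p := 1) (q := 2)
    one_le_two hf.aestronglyMeasurable (μ := ν) (f := f)
  have hexp : 1/(1:ℝ≥0∞).toReal - 1/(2:ℝ≥0∞).toReal = (2⁻¹ : ℝ) := by norm_num
  rw [hexp] at h1
  have hint : Integrable f ν := hf.integrable one_le_two
  have h2 : ∫ x, |f x| ∂ν = (eLpNorm f 1 ν).toReal := by
    rw [eLpNorm_one_eq_lintegral_enorm]
    simpa [Real.norm_eq_abs] using integral_norm_eq_lintegral_enorm hf.aestronglyMeasurable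
  rw [h2]
  have hne : eLpNorm f 2 ν * (ν Set.univ) ^ (2⁻¹ : ℝ) ≠ ⊤ :=
    ENNReal.mul_ne_top hf.eLpNorm_ne_top
      (ENNReal.rpow_lt_top_of_nonneg (by norm_num) (measure_ne_top ν _)).ne
  calc (eLpNorm f 1 ν).toReal ≤ (eLpNorm f 2 ν * (ν Set.univ) ^ (2⁻¹ : ℝ)).toReal :=
        ENNReal.toReal_mono hne h1
    _ = ((ν Set.univ) ^ (2⁻¹ : ℝ)).toReal * (eLpNorm f 2 ν).toReal := by
        rw [ENNReal.toReal_mul, mul_comm]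
end

section
variable {X : Type*} [m : MeasurableSpace X] {μ : Measure X}

-- assume previous lemmas

lemma riesz_piece {C : ℝ} (hC0 : 0 ≤ C) (Λ : (X → ℝ) → ℝ)
    (hbound : ∀ f, Integrable f μ → |Λ f| ≤ C * ∫ x, |f x| ∂μ)
    (hadd : ∀ f g, Integrable f μ → Integrable g μ → Λ (f + g) = Λ f + Λ g)
    (hsmul : ∀ (c : ℝ) (f : X → ℝ), Integrable f μ → Λ (c • f) = c * Λ f)
    (hcongr : ∀ f g : X → ℝ, f =ᵐ[μ] g → Λ f = Λ g)
    {E : Set X} (hE : MeasurableSet E) (hEfin : μ E < ⊤) :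
    ∃ w : X → ℝ, Measurable w ∧ MemLp w 2 (μ.restrict E) ∧
      ∀ f : X → ℝ, MemLp f 2 (μ.restrict E) →
        Λ (E.indicator f) = ∫ x in E, w x * f x ∂μ := by
  haveI : IsFiniteMeasure (μ.restrict E) :=
    ⟨by rw [Measure.restrict_apply_univ]; exact hEfin⟩
  set ν := μ.restrict E with hν
  -- the linear functional on L²(ν)
  have hΛind_congr : ∀ (f g : X → ℝ), f =ᵐ[ν] g →
      Λ (E.indicator f) = Λ (E.indicator g) := fun f g h =>
    hcongr _ _ (indicator_ae_congr hE h)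
  set ℓ₀ : Lp ℝ 2 ν →ₗ[ℝ] ℝ :=
    { toFun := fun f => Λ (E.indicator f)
      map_add' := by
        intro f g
        have h1 : Λ (E.indicator ⇑(f + g)) = Λ (E.indicator (⇑f + ⇑g)) :=
          hΛind_congr _ _ (Lp.coeFn_add f g)
        have h2 : E.indicator (⇑f + ⇑g) = E.indicator ⇑f + E.indicator ⇑g := by
          funext x; by_cases hx : x ∈ E <;> simp [Set.indicator_of_mem, hx, Set.indicator]
        simp only [h1, h2]
        exact hadd _ _ (memL2_indicator_integrable hE hEfin (Lp.memLp f))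
          (memL2_indicator_integrable hE hEfin (Lp.memLp g))
      map_smul' := by
        intro c f
        have h1 : Λ (E.indicator ⇑(c • f)) = Λ (E.indicator (c • ⇑f)) :=
          hΛind_congr _ _ (Lp.coeFn_smul c f)
        have h2 : E.indicator (c • ⇑f) = c • (E.indicator ⇑f) := by
          funext x; by_cases hx : x ∈ E <;> simp [Set.indicator, hx]
        simp only [h1, h2, RingHom.id_apply]
        exact hsmul c _ (memL2_indicator_integrable hE hEfin (Lp.memLp f)) } with hℓ₀
  have hℓbound : ∀ f : Lp ℝ 2 ν, ‖ℓ₀ f‖ ≤ (C * ((ν Set.univ) ^ (2⁻¹ : ℝ)).toReal) * ‖f‖ := by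
    intro f
    have h1 : |Λ (E.indicator ⇑f)| ≤ C * ∫ x, |E.indicator ⇑f x| ∂μ :=
      hbound _ (memL2_indicator_integrable hE hEfin (Lp.memLp f))
    have h2 : ∫ x, |E.indicator ⇑f x| ∂μ = ∫ x, |⇑f x| ∂ν := by
      have : (fun x => |E.indicator ⇑f x|) = E.indicator (fun x => |⇑f x|) := by
        funext x; by_cases hx : x ∈ E <;> simp [Set.indicator, hx]
      rw [this, integral_indicator hE]
    have h3 := integral_abs_le_sqrt_L2 (Lp.memLp f)
    have h4 : ‖f‖ = (eLpNorm ⇑f 2 ν).toReal := by rw [Lp.norm_def]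
    calc ‖ℓ₀ f‖ = |Λ (E.indicator ⇑f)| := rfl
      _ ≤ C * ∫ x, |⇑f x| ∂ν := by rw [← h2]; exact h1
      _ ≤ C * (((ν Set.univ) ^ (2⁻¹ : ℝ)).toReal * (eLpNorm ⇑f 2 ν).toReal) :=
          mul_le_mul_of_nonneg_left h3 hC0
      _ = (C * ((ν Set.univ) ^ (2⁻¹ : ℝ)).toReal) * ‖f‖ := by rw [h4]; ring
  set ℓ : Lp ℝ 2 ν →L[ℝ] ℝ := LinearMap.mkContinuous ℓ₀ _ hℓbound with hℓ
  set w' : Lp ℝ 2 ν := (InnerProductSpace.toDual ℝ (Lp ℝ 2 ν)).symm ℓ with hw'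
  have hrep : ∀ f : Lp ℝ 2 ν, (inner ℝ w' f : ℝ) = Λ (E.indicator ⇑f) := by
    intro f
    rw [hw', InnerProductSpace.toDual_symm_apply]
    rfl
  -- measurable version
  have hasm : AEStronglyMeasurable (⇑w') ν := Lp.aestronglyMeasurable w'
  refine ⟨hasm.mk ⇑w', hasm.stronglyMeasurable_mk.measurable, ?_, ?_⟩
  · exact (Lp.memLp w').ae_eq hasm.ae_eq_mk
  · intro f hf
    have h1 : Λ (E.indicator f) = Λ (E.indicator ⇑(hf.toLp f)) :=
      (hΛind_congr _ _ (hf.coeFn_toLp).symm)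
    rw [h1, ← hrep]
    have h2 : (inner ℝ w' (hf.toLp f) : ℝ) = ∫ x, (⇑w' x) * (⇑(hf.toLp f) x) ∂ν := by
      rw [L2.inner_def]
      congr 1
      funext a
      simp [mul_comm]
    rw [h2]
    refine integral_congr_ae ?_
    filter_upwards [hasm.ae_eq_mk, hf.coeFn_toLp] with x h1 h2
    rw [← h1, h2]
end

section
variable {X : Type*} [m : MeasurableSpace X] {μ : Measure X}

lemma piece_ae_bound {C : ℝ} (hC0 : 0 ≤ C) (Λ : (X → ℝ) → ℝ)
    (hbound : ∀ f, Integrable f μ → |Λ f| ≤ C * ∫ x, |f x| ∂μ)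
    {E : Set X} (hE : MeasurableSet E) (hEfin : μ E < ⊤)
    {w : X → ℝ} (hwmeas : Measurable w) (hwmem : MemLp w 2 (μ.restrict E))
    (hwrep : ∀ f : X → ℝ, MemLp f 2 (μ.restrict E) →
        Λ (E.indicator f) = ∫ x in E, w x * f x ∂μ) :
    ∀ᵐ x ∂(μ.restrict E), |w x| ≤ C := by
  haveI : IsFiniteMeasure (μ.restrict E) :=
    ⟨by rw [Measure.restrict_apply_univ]; exact hEfin⟩
  have hwint : Integrable w (μ.restrict E) := hwmem.integrable one_le_two
  have key : ∀ δ : ℝ, 0 < δ → ∀ σ : ℝ, |σ| = 1 →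
      μ (E ∩ {x | C + δ ≤ σ * w x}) = 0 := by
    intro δ hδ σ hσ
    set s := E ∩ {x | C + δ ≤ σ * w x} with hs_def
    have hs : MeasurableSet s :=
      hE.inter (measurableSet_le measurable_const (hwmeas.const_mul σ))
    have hsE : s ⊆ E := Set.inter_subset_left
    have hsfin : μ s < ⊤ := (measure_mono hsE).trans_lt hEfin
    set f : X → ℝ := s.indicator (fun _ => (1:ℝ)) with hf_def
    have hfmeas : Measurable f := measurable_const.indicator hs
    have hfmem : MemLp f 2 (μ.restrict E) := by
      refine MemLp.of_bound hfmeas.aestronglyMeasurable 1 ?_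
      refine Filter.Eventually.of_forall (fun x => ?_)
      rw [Real.norm_eq_abs]
      by_cases hx : x ∈ s <;> simp [hf_def, Set.indicator_of_mem, Set.indicator_of_notMem, hx]
    have hEind : E.indicator f = f := by
      funext x
      by_cases hx : x ∈ E
      · rw [Set.indicator_of_mem hx]
      · have hxs : x ∉ s := fun hxs => hx (hsE hxs)
        simp [Set.indicator_of_notMem, hx, hf_def, hxs]
    have hfint : Integrable f μ := by
      rw [hf_def, integrable_indicator_iff hs]
      exact integrableOn_const hsfin.ne
    have hwints : IntegrableOn w s μ := by
      have h1 : IntegrableOn w s (μ.restrict E) := hwint.integrableOn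
      rwa [IntegrableOn, Measure.restrict_restrict hs,
        Set.inter_eq_self_of_subset_left hsE] at h1
    have h1 : Λ f = ∫ x in s, w x ∂μ := by
      rw [← hEind, hwrep f hfmem]
      calc ∫ x in E, w x * f x ∂μ = ∫ x in E, s.indicator w x ∂μ := by
            refine integral_congr_ae (Filter.Eventually.of_forall (fun x => ?_))
            by_cases hx : x ∈ s <;>
              simp [hf_def, Set.indicator_of_mem, Set.indicator_of_notMem, hx]
        _ = ∫ x in s, w x ∂(μ.restrict E) := integral_indicator hs
        _ = ∫ x in s, w x ∂μ := by
            rw [Measure.restrict_restrict hs, Set.inter_eq_self_of_subset_left hsE]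
    have h2 : (C + δ) * (μ s).toReal ≤ ∫ x in s, σ * w x ∂μ := by
      have := setIntegral_ge_of_const_le hs hsfin.ne (c := C + δ) (f := fun x => σ * w x)
        (fun x hx => hx.2) (hwints.const_mul σ)
      rw [smul_eq_mul, mul_comm] at this
      exact this
    have h3 : ∫ x in s, σ * w x ∂μ = σ * Λ f := by
      rw [h1, integral_const_mul]
    have h4 : σ * Λ f ≤ |Λ f| := by
      calc σ * Λ f ≤ |σ * Λ f| := le_abs_self _
        _ = |Λ f| := by rw [abs_mul, hσ, one_mul]
    have h5 : |Λ f| ≤ C * (μ s).toReal := by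
      have := hbound f hfint
      have habs : ∫ x, |f x| ∂μ = (μ s).toReal := by
        have : ∀ x, |f x| = f x := by
          intro x
          by_cases hx : x ∈ s <;>
            simp [hf_def, Set.indicator_of_mem, Set.indicator_of_notMem, hx]
        rw [funext this, hf_def]
        exact integral_indicator_one hs
      rwa [habs] at this
    have h6 : (C + δ) * (μ s).toReal ≤ C * (μ s).toReal := by
      calc (C + δ) * (μ s).toReal ≤ ∫ x in s, σ * w x ∂μ := h2
        _ = σ * Λ f := h3
        _ ≤ |Λ f| := h4
        _ ≤ C * (μ s).toReal := h5
    have h7 : (μ s).toReal = 0 := by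
      nlinarith [ENNReal.toReal_nonneg (a := μ s)]
    exact (ENNReal.toReal_eq_zero_iff _).mp h7 |>.resolve_right hsfin.ne
  -- combine over δ = 1/(k+1) and σ = ±1
  rw [ae_iff]
  have hsub : {x | ¬ |w x| ≤ C} ⊆
      ⋃ k : ℕ, ({x | C + 1/(k+1) ≤ 1 * w x} ∪ {x | C + 1/(k+1) ≤ (-1) * w x}) := by
    intro x hx
    rw [Set.mem_setOf_eq, not_le] at hx
    have h1 : C < |w x| := hx
    obtain ⟨k, hk⟩ := exists_nat_one_div_lt (sub_pos.mpr h1)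
    refine Set.mem_iUnion.mpr ⟨k, ?_⟩
    have h2 : C + 1/(k+1) ≤ |w x| := by
      have : (1:ℝ)/(k+1) < |w x| - C := hk
      linarith
    rcases abs_cases (w x) with ⟨he, _⟩ | ⟨he, _⟩
    · left; rw [Set.mem_setOf_eq, one_mul]; rw [he] at h2; exact h2
    · right; rw [Set.mem_setOf_eq, neg_one_mul]; rw [he] at h2; exact h2
  refine measure_mono_null hsub (measure_iUnion_null fun k => ?_)
  have hpos : (0:ℝ) < 1/(k+1) := by positivity
  refine measure_union_null ?_ ?_
  · have := key (1/(k+1)) hpos 1 (by norm_num)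
    rw [Measure.restrict_apply' hE, Set.inter_comm]
    exact this
  · have := key (1/(k+1)) hpos (-1) (by norm_num)
    rw [Measure.restrict_apply' hE, Set.inter_comm]
    exact this
end

section
variable {X : Type*} [m : MeasurableSpace X] {μ : Measure X}



lemma glue_repr (μ : Measure X) [SigmaFinite μ] {C : ℝ} (hC0 : 0 ≤ C) (Λ : (X → ℝ) → ℝ)
    (hbound : ∀ f, Integrable f μ → |Λ f| ≤ C * ∫ x, |f x| ∂μ)
    (hadd : ∀ f g, Integrable f μ → Integrable g μ → Λ (f + g) = Λ f + Λ g)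
    (hsmul : ∀ (c : ℝ) (f : X → ℝ), Integrable f μ → Λ (c • f) = c * Λ f)
    (hcongr : ∀ f g : X → ℝ, f =ᵐ[μ] g → Λ f = Λ g) :
    ∃ v : X → ℝ, Measurable v ∧ (∀ x, |v x| ≤ C) ∧
      ∀ f, Integrable f μ → Λ f = ∫ x, v x * f x ∂μ := by
  classical
  -- the pieces
  set E : ℕ → Set X := disjointed (spanningSets μ) with hE
  have hEm : ∀ j, MeasurableSet (E j) :=
    MeasurableSet.disjointed (measurableSet_spanningSets μ)
  have hEfin : ∀ j, μ (E j) < ⊤ := fun j =>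
    (measure_mono (disjointed_subset _ j)).trans_lt (measure_spanningSets_lt_top μ j)
  have hEdisj : Pairwise (Function.onFun Disjoint E) := disjoint_disjointed _
  have hEcover : (⋃ j, E j) = Set.univ := by
    rw [hE, iUnion_disjointed, iUnion_spanningSets]
  haveI : ∀ j, IsFiniteMeasure (μ.restrict (E j)) := fun j =>
    ⟨by rw [Measure.restrict_apply_univ]; exact hEfin j⟩
  -- Riesz on each piece
  choose w hwmeas hwmem hwrep using fun j =>
    riesz_piece hC0 Λ hbound hadd hsmul hcongr (hEm j) (hEfin j)
  -- every point lies in exactly one piece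
  have hmem : ∀ x : X, ∃ j, x ∈ E j := by
    intro x
    have : x ∈ ⋃ j, E j := hEcover ▸ Set.mem_univ x
    exact Set.mem_iUnion.mp this
  have huniq : ∀ {x j j'}, x ∈ E j → x ∈ E j' → j = j' := by
    intro x j j' hj hj'
    by_contra hne
    exact (hEdisj hne).le_bot ⟨hj, hj'⟩ |>.elim
  -- the glued function
  set v₀ : X → ℝ := fun x => ∑' j, (E j).indicator (w j) x with hv₀
  have hv₀sum : ∀ {x j}, x ∈ E j → HasSum (fun i => (E i).indicator (w i) x) (w j x) := by
    intro x j hj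
    have h := hasSum_single (f := fun i => (E i).indicator (w i) x) j ?_
    · rwa [Set.indicator_of_mem hj] at h
    · intro i hi
      apply Set.indicator_of_notMem
      intro hxi
      exact hi (huniq hxi hj)
  have hv₀eq : ∀ {x j}, x ∈ E j → v₀ x = w j x := fun {x j} hj => (hv₀sum hj).tsum_eq
  have hv₀meas : Measurable v₀ := by
    apply measurable_of_tendsto_metrizable
      (f := fun N x => ∑ j ∈ Finset.range N, (E j).indicator (w j) x)
    · intro N
      exact Finset.measurable_sum _ (fun j _ => (hwmeas j).indicator (hEm j))
    · rw [tendsto_pi_nhds]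
      intro x
      obtain ⟨j, hj⟩ := hmem x
      rw [hv₀eq hj]
      exact (hv₀sum hj).tendsto_sum_nat
  -- a.e. bound on each piece
  have hbddj : ∀ j, ∀ᵐ x ∂(μ.restrict (E j)), |w j x| ≤ C := fun j =>
    piece_ae_bound hC0 Λ hbound (hEm j) (hEfin j) (hwmeas j) (hwmem j) (hwrep j)
  -- global a.e. bound
  have hbdd : ∀ᵐ x ∂μ, |v₀ x| ≤ C := by
    set bad := {x | ¬ |v₀ x| ≤ C} with hbad
    have hsub : bad ⊆ ⋃ j, bad ∩ E j := by
      intro x hx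
      obtain ⟨j, hj⟩ := hmem x
      exact Set.mem_iUnion.mpr ⟨j, hx, hj⟩
    have hnull : ∀ j, μ (bad ∩ E j) = 0 := by
      intro j
      have h1 : bad ∩ E j ⊆ {x | ¬ |w j x| ≤ C} ∩ E j := by
        rintro x ⟨hxb, hxE⟩
        refine ⟨?_, hxE⟩
        rwa [Set.mem_setOf_eq, ← hv₀eq hxE]
      have h2 : μ ({x | ¬ |w j x| ≤ C} ∩ E j) = 0 := by
        have := hbddj j
        rw [ae_iff, Measure.restrict_apply' (hEm j)] at this
        exact this
      exact measure_mono_null h1 h2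
    have : μ bad = 0 :=
      measure_mono_null hsub (by
        refine measure_iUnion_null fun j => hnull j)
    rwa [ae_iff]
  -- clamp
  set v : X → ℝ := fun x => max (-C) (min C (v₀ x)) with hv
  have hvmeas : Measurable v := measurable_const.max (measurable_const.min hv₀meas)
  have hvbdd : ∀ x, |v x| ≤ C := by
    intro x
    rw [abs_le]
    constructor
    · exact le_max_left _ _
    · exact max_le (neg_le_self hC0) (min_le_left _ _)
  have hvae : v =ᵐ[μ] v₀ := by
    filter_upwards [hbdd] with x hx
    rw [hv]
    have h := abs_le.mp hx
    simp only [min_eq_right h.2, max_eq_right h.1]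
  -- representation on pieces with v
  have hrep1 : ∀ j (f : X → ℝ), MemLp f 2 (μ.restrict (E j)) →
      Λ ((E j).indicator f) = ∫ x in E j, v x * f x ∂μ := by
    intro j f hf
    rw [hwrep j f hf]
    refine integral_congr_ae ?_
    have h1 : ∀ᵐ x ∂(μ.restrict (E j)), v x = v₀ x := ae_restrict_of_ae hvae
    filter_upwards [h1, ae_restrict_mem (hEm j)] with x hx hxE
    rw [hx, hv₀eq hxE]
  -- conclusion for integrable f
  refine ⟨v, hvmeas, hvbdd, ?_⟩
  have hΛzero : Λ 0 = 0 := by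
    have h1 := hadd 0 0 (integrable_zero _ _ _) (integrable_zero _ _ _)
    have h0 : (0:X→ℝ) + 0 = 0 := by simp
    rw [h0] at h1; linarith
  have hΛsum : ∀ (N : ℕ) (g : ℕ → X → ℝ), (∀ j, Integrable (g j) μ) →
      Λ (∑ j ∈ Finset.range N, g j) = ∑ j ∈ Finset.range N, Λ (g j) := by
    intro N g hg
    induction N with
    | zero => simpa using hΛzero
    | succ N ih =>
        rw [Finset.sum_range_succ, Finset.sum_range_succ, ← ih]
        refine hadd _ _ ?_ (hg N)
        have h := integrable_finset_sum (Finset.range N) (fun j (_ : j ∈ Finset.range N) => hg j)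
        refine h.congr (Filter.Eventually.of_forall (fun x => ?_))
        simp
  suffices H : ∀ f : X → ℝ, Integrable f μ → StronglyMeasurable f →
      Λ f = ∫ x, v x * f x ∂μ by
    intro f hf
    have hmk := hf.aestronglyMeasurable.ae_eq_mk
    rw [hcongr f _ hmk,
      H _ (hf.congr hmk) hf.aestronglyMeasurable.stronglyMeasurable_mk]
    refine (integral_congr_ae ?_).symm
    filter_upwards [hmk] with x hx
    rw [hx]
  intro f hf hfm
  -- truncations
  set fN : ℕ → X → ℝ := fun N x => max (-(N:ℝ)) (min (N:ℝ) (f x)) with hfN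
  have hNnn : ∀ N : ℕ, (0:ℝ) ≤ N := fun N => Nat.cast_nonneg N
  have hfN_meas : ∀ N, Measurable (fN N) :=
    fun N => measurable_const.max (measurable_const.min hfm.measurable)
  have hfN_abs : ∀ N x, |fN N x| ≤ |f x| := by
    intro N x
    rw [abs_le]
    constructor
    · exact le_max_of_le_right (le_min (by linarith [abs_nonneg (f x), hNnn N])
        (neg_abs_le (f x)))
    · exact max_le (by linarith [abs_nonneg (f x), hNnn N])
        ((min_le_right _ _).trans (le_abs_self _))
  have hfN_bdd : ∀ N x, |fN N x| ≤ N := by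
    intro N x
    rw [abs_le]
    exact ⟨le_max_left _ _, max_le (neg_le_self (hNnn N)) (min_le_left _ _)⟩
  have hfN_eq : ∀ (N : ℕ) (x : X), |f x| ≤ (N:ℝ) → fN N x = f x := by
    intro N x hx
    have h1 := abs_le.mp hx
    show max (-(N:ℝ)) (min (N:ℝ) (f x)) = f x
    rw [min_eq_right h1.2, max_eq_right h1.1]
  -- the approximating sequence
  set g : ℕ → X → ℝ := fun N x => ∑ j ∈ Finset.range N, (E j).indicator (fN N) x with hg
  have hind_int : ∀ N j, Integrable ((E j).indicator (fN N)) μ := by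
    intro N j
    rw [integrable_indicator_iff (hEm j)]
    refine Integrable.mono' (integrable_const (N:ℝ)) ?_ ?_
    · exact ((hfN_meas N).aestronglyMeasurable).restrict
    · exact Filter.Eventually.of_forall (fun x => by
        rw [Real.norm_eq_abs]; exact hfN_bdd N x)
  have hg_int : ∀ N, Integrable (g N) μ := fun N =>
    integrable_finset_sum _ (fun j _ => hind_int N j)
  have hmem2 : ∀ N j, MemLp (fN N) 2 (μ.restrict (E j)) := by
    intro N j
    refine MemLp.of_bound ((hfN_meas N).aestronglyMeasurable).restrict (N:ℝ) ?_
    exact Filter.Eventually.of_forall (fun x => by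
      rw [Real.norm_eq_abs]; exact hfN_bdd N x)
  -- value of Λ on g N
  have hΛg : ∀ N, Λ (g N) = ∫ x, v x * g N x ∂μ := by
    intro N
    have hgN : g N = ∑ j ∈ Finset.range N, (E j).indicator (fN N) := by
      funext x
      simp [hg, Finset.sum_apply]
    have hint2 : ∀ j, Integrable ((E j).indicator (fun x => v x * fN N x)) μ := by
      intro j
      rw [integrable_indicator_iff (hEm j)]
      refine Integrable.mono' (integrable_const (C * N)) ?_ ?_
      · exact (hvmeas.mul (hfN_meas N)).aestronglyMeasurable.restrict
      · refine Filter.Eventually.of_forall (fun x => ?_)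
        rw [Real.norm_eq_abs, abs_mul]
        exact mul_le_mul (hvbdd x) (hfN_bdd N x) (abs_nonneg _) hC0
    have hvg : (fun x => v x * g N x)
        = fun x => ∑ j ∈ Finset.range N, (E j).indicator (fun y => v y * fN N y) x := by
      funext x
      simp only [hg, Finset.mul_sum]
      refine Finset.sum_congr rfl (fun j _ => ?_)
      by_cases hx : x ∈ E j <;>
        simp [Set.indicator_of_mem, Set.indicator_of_notMem, hx]
    calc Λ (g N) = Λ (∑ j ∈ Finset.range N, (E j).indicator (fN N)) := congrArg Λ hgN
      _ = ∑ j ∈ Finset.range N, Λ ((E j).indicator (fN N)) :=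
          hΛsum N _ (fun j => hind_int N j)
      _ = ∑ j ∈ Finset.range N, ∫ x in E j, v x * fN N x ∂μ :=
          Finset.sum_congr rfl (fun j _ => hrep1 j (fN N) (hmem2 N j))
      _ = ∑ j ∈ Finset.range N, ∫ x, (E j).indicator (fun y => v y * fN N y) x ∂μ := by
          refine Finset.sum_congr rfl (fun j _ => ?_)
          rw [integral_indicator (hEm j)]
      _ = ∫ x, ∑ j ∈ Finset.range N, (E j).indicator (fun y => v y * fN N y) x ∂μ :=
          (integral_finset_sum _ (fun j _ => hint2 j)).symm
      _ = ∫ x, v x * g N x ∂μ := by rw [← hvg]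
  -- pointwise convergence of g N to f
  have hg_ptwise : ∀ x, ∀ᶠ N in atTop, g N x = f x := by
    intro x
    obtain ⟨j₀, hj₀⟩ := hmem x
    obtain ⟨N₀, hN₀⟩ := exists_nat_ge |f x|
    rw [eventually_atTop]
    refine ⟨max (j₀+1) N₀, fun N hN => ?_⟩
    have hj₀N : j₀ < N := lt_of_lt_of_le (Nat.lt_succ_self j₀)
      (le_trans (le_max_left _ _) hN)
    have hNfx : |f x| ≤ (N:ℝ) := le_trans hN₀ (Nat.cast_le.mpr (le_trans (le_max_right _ _) hN))
    show (∑ j ∈ Finset.range N, (E j).indicator (fN N) x) = f x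
    rw [Finset.sum_eq_single j₀ ?_ ?_]
    · rw [Set.indicator_of_mem hj₀, hfN_eq N x hNfx]
    · intro j _ hj
      exact Set.indicator_of_notMem (fun hxj => hj (huniq hxj hj₀)) _
    · intro h
      exact absurd (Finset.mem_range.mpr hj₀N) h
  have hg_abs : ∀ N x, |g N x| ≤ |f x| := by
    intro N x
    obtain ⟨j₀, hj₀⟩ := hmem x
    show |∑ j ∈ Finset.range N, (E j).indicator (fN N) x| ≤ |f x|
    by_cases hj₀N : j₀ ∈ Finset.range N
    · rw [Finset.sum_eq_single j₀ (fun j _ hj =>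
        Set.indicator_of_notMem (fun hxj => hj (huniq hxj hj₀)) _)
        (fun h => absurd hj₀N h)]
      rw [Set.indicator_of_mem hj₀]
      exact hfN_abs N x
    · rw [Finset.sum_eq_zero (fun j hj => ?_), abs_zero]
      · exact abs_nonneg _
      · refine Set.indicator_of_notMem (fun hxj => ?_) _
        exact hj₀N (huniq hxj hj₀ ▸ hj)
  -- L¹ convergence
  have hL1 : Tendsto (fun N => ∫ x, |g N x - f x| ∂μ) atTop (𝓝 0) := by
    have h0 : (0:ℝ) = ∫ x, (0:ℝ) ∂μ := by simp
    rw [h0]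
    refine tendsto_integral_of_dominated_convergence (fun x => 2 * |f x|)
      ?_ ?_ ?_ ?_
    · intro N
      exact ((((hg_int N).sub hf).abs).aestronglyMeasurable)
    · exact hf.abs.const_mul 2
    · intro N
      refine Filter.Eventually.of_forall (fun x => ?_)
      rw [Real.norm_eq_abs, abs_abs]
      calc |g N x - f x| ≤ |g N x| + |f x| := abs_sub _ _
        _ ≤ |f x| + |f x| := by linarith [hg_abs N x]
        _ = 2 * |f x| := by ring
    · refine Filter.Eventually.of_forall (fun x => ?_)
      refine Tendsto.congr' ?_ tendsto_const_nhds
      filter_upwards [hg_ptwise x] with N hN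
      rw [hN, sub_self, abs_zero]
  -- Λ (g N) → Λ f
  have hΛconv : Tendsto (fun N => Λ (g N)) atTop (𝓝 (Λ f)) := by
    have hdiff : ∀ N, |Λ (g N) - Λ f| ≤ C * ∫ x, |g N x - f x| ∂μ := by
      intro N
      have h1 : Λ f = Λ (g N) + Λ (f - g N) := by
        rw [← hadd _ _ (hg_int N) (hf.sub (hg_int N))]
        refine hcongr _ _ (Filter.Eventually.of_forall (fun x => ?_))
        simp [Pi.add_apply, Pi.sub_apply]
      have h2 : Λ (g N) - Λ f = - Λ (f - g N) := by rw [h1]; ring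
      rw [h2, abs_neg]
      have h3 := hbound (f - g N) (hf.sub (hg_int N))
      have h4 : ∫ x, |(f - g N) x| ∂μ = ∫ x, |g N x - f x| ∂μ := by
        refine integral_congr_ae (Filter.Eventually.of_forall (fun x => ?_))
        simp [Pi.sub_apply, abs_sub_comm]
      rwa [h4] at h3
    rw [tendsto_iff_dist_tendsto_zero]
    have hCconv : Tendsto (fun N => C * ∫ x, |g N x - f x| ∂μ) atTop (𝓝 0) := by
      have := hL1.const_mul C
      simpa using this
    refine squeeze_zero (fun N => dist_nonneg) (fun N => ?_) hCconv
    rw [Real.dist_eq]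
    exact hdiff N
  -- ∫ v·g N → ∫ v·f
  have hIconv : Tendsto (fun N => ∫ x, v x * g N x ∂μ) atTop (𝓝 (∫ x, v x * f x ∂μ)) := by
    refine tendsto_integral_of_dominated_convergence (fun x => C * |f x|)
      ?_ ?_ ?_ ?_
    · intro N
      exact (hvmeas.aestronglyMeasurable.mul (hg_int N).aestronglyMeasurable)
    · exact hf.abs.const_mul C
    · intro N
      refine Filter.Eventually.of_forall (fun x => ?_)
      rw [Real.norm_eq_abs, abs_mul]
      exact mul_le_mul (hvbdd x) (hg_abs N x) (abs_nonneg _) hC0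
    · refine Filter.Eventually.of_forall (fun x => ?_)
      refine Tendsto.congr' ?_ ((tendsto_const_nhds (x := v x * f x)))
      filter_upwards [hg_ptwise x] with N hN
      rw [hN]
  -- conclude
  have hfinal : Tendsto (fun N => Λ (g N)) atTop (𝓝 (∫ x, v x * f x ∂μ)) := by
    refine hIconv.congr (fun N => ?_)
    rw [hΛg N]
  exact tendsto_nhds_unique hΛconv hfinal
end

section
variable {X : Type*} [m : MeasurableSpace X] {μ : Measure X} [SigmaFinite μ] {T : X → X}

-- from t1

lemma measurable_comap_iterate (hT : Measurable T) {n k : ℕ} (hnk : n ≤ k) {F : X → ℝ}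
    (hF : Measurable F) :
    Measurable[MeasurableSpace.comap (T^[n]) m] (fun x => F (T^[k] x)) := by
  have h1 : Measurable[MeasurableSpace.comap (T^[n]) m, m] (T^[n]) :=
    (measurable_iff_comap_le (m₁ := MeasurableSpace.comap (T^[n]) m)).mpr le_rfl
  have h2 := (hF.comp (hT.iterate (k-n))).comp h1
  have : (fun x => F (T^[k] x)) = (fun x => F (T^[k-n] (T^[n] x))) := by
    funext x; rw [← Function.iterate_add_apply, Nat.sub_add_cancel hnk]
  rw [this]; exact h2

lemma pullout_integral (hT : MeasurePreserving T μ μ)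
    {F : X → ℝ} (hF : Measurable F) {C : ℝ} (hC : ∀ x, |F x| ≤ C)
    {f : X → ℝ} (hf : Integrable f μ) {n k : ℕ} (hnk : n ≤ k) :
    ∫ x, F (T^[k] x) * (μ[f | MeasurableSpace.comap (T^[n]) m]) x ∂μ
      = ∫ x, F (T^[k] x) * f x ∂μ := by
  have hm : MeasurableSpace.comap (T^[n]) m ≤ m := comap_le_of_measurable hT.measurable n
  haveI : SigmaFinite (μ.trim hm) := sigmaFinite_trim_comap μ hT n
  have hφm : StronglyMeasurable[MeasurableSpace.comap (T^[n]) m] (fun x => F (T^[k] x)) :=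
    (measurable_comap_iterate hT.measurable hnk hF).stronglyMeasurable
  have hφmeas : Measurable (fun x => F (T^[k] x)) := hF.comp (hT.measurable.iterate k)
  have hint : Integrable ((fun x => F (T^[k] x)) * f) μ :=
    hf.bdd_mul hφmeas.aestronglyMeasurable (Filter.Eventually.of_forall fun x => by simpa [Real.norm_eq_abs] using hC (T^[k] x))
  have hpull := condExp_mul_of_stronglyMeasurable_left (μ := μ)
    (m := MeasurableSpace.comap (T^[n]) m) hφm hint hf
  calc ∫ x, F (T^[k] x) * (μ[f|MeasurableSpace.comap (T^[n]) m]) x ∂μ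
      = ∫ x, ((fun x => F (T^[k] x)) * μ[f|MeasurableSpace.comap (T^[n]) m]) x ∂μ := rfl
    _ = ∫ x, (μ[(fun x => F (T^[k] x)) * f|MeasurableSpace.comap (T^[n]) m]) x ∂μ :=
        (integral_congr_ae hpull.symm)
    _ = ∫ x, ((fun x => F (T^[k] x)) * f) x ∂μ := integral_condExp hm
    _ = ∫ x, F (T^[k] x) * f x ∂μ := rfl
end

lemma vmeas_on_piece {X : Type*} {m2 m0 : MeasurableSpace X} {μ : Measure X}
    (hm : m2 ≤ m0) [SigmaFinite (μ.trim hm)]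
    {v : X → ℝ} (hv : Measurable v) {C : ℝ} (hC0 : 0 ≤ C) (hvbdd : ∀ x, |v x| ≤ C)
    (hvinv : ∀ f : X → ℝ, Integrable f μ → ∫ x, v x * f x ∂μ = ∫ x, v x * (μ[f|m2]) x ∂μ)
    {G : Set X} (hG2 : MeasurableSet[m2] G) (hGfin : μ G < ⊤) :
    v =ᵐ[μ.restrict G] (μ.restrict G)[v|m2] := by
  have hG : MeasurableSet G := hm _ hG2
  haveI : IsFiniteMeasure (μ.restrict G) :=
    ⟨by rw [Measure.restrict_apply_univ]; exact hGfin⟩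
  haveI : SigmaFinite ((μ.restrict G).trim hm) := by
    rw [← restrict_trim hm μ hG2]; infer_instance
  set ν := μ.restrict G with hν
  set w := ν[v|m2] with hw
  have hw_sm : StronglyMeasurable[m2] w := stronglyMeasurable_condExp
  have hv_int : Integrable v ν := by
    refine Integrable.mono' (integrable_const C) hv.aestronglyMeasurable ?_
    exact Filter.Eventually.of_forall (fun x => by rw [Real.norm_eq_abs]; exact hvbdd x)
  have hw_int : Integrable w ν := integrable_condExp
  have hw_bdd : ∀ᵐ x ∂ν, |w x| ≤ C := by
    have hup : w ≤ᵐ[ν] ν[fun _ => C|m2] :=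
      condExp_mono hv_int (integrable_const C)
        (Filter.Eventually.of_forall (fun x => (abs_le.mp (hvbdd x)).2))
    have hdown : ν[fun _ => -C|m2] ≤ᵐ[ν] w :=
      condExp_mono (integrable_const (-C)) hv_int
        (Filter.Eventually.of_forall (fun x => (abs_le.mp (hvbdd x)).1))
    rw [condExp_const hm C] at hup
    rw [condExp_const hm (-C)] at hdown
    filter_upwards [hup, hdown] with x h1 h2
    rw [abs_le]
    exact ⟨h2, h1⟩
  -- the test function u
  set u : X → ℝ := G.indicator (fun x => v x - w x) with hu
  have hu_int : Integrable u μ := by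
    rw [hu, integrable_indicator_iff hG]
    exact hv_int.sub hw_int
  set ρ := μ[u|m2] with hρ
  have hρ_int : Integrable ρ μ := integrable_condExp
  have hρ_sm : StronglyMeasurable[m2] ρ := stronglyMeasurable_condExp
  have hρ_intν : Integrable ρ ν := hρ_int.integrableOn
  have hρG : ρ =ᵐ[μ] G.indicator ρ := by
    have h1 : G.indicator u = u := by
      rw [hu, Set.indicator_indicator, Set.inter_self]
    have h2 := condExp_indicator hu_int hG2
    rw [h1] at h2
    exact h2
  -- (1)
  have h1 : ∫ x, v x * u x ∂μ = ∫ x, v x * ρ x ∂μ := hvinv u hu_int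
  -- (2)  ∫ v ρ dμ = ∫ v ρ dν
  have h2 : ∫ x, v x * ρ x ∂μ = ∫ x, v x * ρ x ∂ν := by
    calc ∫ x, v x * ρ x ∂μ = ∫ x, v x * G.indicator ρ x ∂μ := by
          refine integral_congr_ae ?_
          filter_upwards [hρG] with x hx
          rw [← hx]
      _ = ∫ x, G.indicator (fun y => v y * ρ y) x ∂μ := by
          refine integral_congr_ae (Filter.Eventually.of_forall (fun x => ?_))
          by_cases hx : x ∈ G <;>
            simp [Set.indicator_of_mem, Set.indicator_of_notMem, hx]
      _ = ∫ x, v x * ρ x ∂ν := integral_indicator hG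
  -- (3)  ∫ v ρ dν = ∫ w ρ dν  (pull-out w.r.t. ν)
  have hρv_int : Integrable (ρ * v) ν := by
    have := hρ_intν.bdd_mul hv.aestronglyMeasurable
      (Filter.Eventually.of_forall fun x => by rw [Real.norm_eq_abs]; exact hvbdd x)
    refine this.congr (Filter.Eventually.of_forall (fun x => ?_))
    simp [mul_comm]
  have h3 : ∫ x, v x * ρ x ∂ν = ∫ x, w x * ρ x ∂ν := by
    have hpull := condExp_mul_of_stronglyMeasurable_left (μ := ν) hρ_sm hρv_int hv_int
    calc ∫ x, v x * ρ x ∂ν = ∫ x, (ρ * v) x ∂ν := by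
          refine integral_congr_ae (Filter.Eventually.of_forall (fun x => ?_))
          simp [mul_comm]
      _ = ∫ x, (ν[ρ * v|m2]) x ∂ν := (integral_condExp hm).symm
      _ = ∫ x, (ρ * ν[v|m2]) x ∂ν := integral_congr_ae hpull
      _ = ∫ x, w x * ρ x ∂ν := by
          refine integral_congr_ae (Filter.Eventually.of_forall (fun x => ?_))
          exact mul_comm _ _
  -- (4)  ∫ w u dμ = ∫ w ρ dν
  have hrestr : ν[u|m2] =ᵐ[ν] ρ := condExp_restrict_ae_eq_restrict hm hG2 hu_int
  have hu_intν : Integrable u ν := hu_int.integrableOn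
  have hwu_int : Integrable (fun x => w x * u x) ν := hu_intν.bdd_mul (hw_sm.mono hm).aestronglyMeasurable
    (by filter_upwards [hw_bdd] with x hx; rw [Real.norm_eq_abs]; exact hx)
  have h4 : ∫ x, w x * u x ∂μ = ∫ x, w x * ρ x ∂ν := by
    have hstep1 : ∫ x, w x * u x ∂μ = ∫ x, w x * u x ∂ν := by
      calc ∫ x, w x * u x ∂μ = ∫ x, G.indicator (fun y => w y * u y) x ∂μ := by
            refine integral_congr_ae (Filter.Eventually.of_forall (fun x => ?_))
            by_cases hx : x ∈ G <;>
              simp [hu, Set.indicator_of_mem, Set.indicator_of_notMem, hx]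
        _ = ∫ x, w x * u x ∂ν := integral_indicator hG
    have hpull := condExp_mul_of_stronglyMeasurable_left (μ := ν) hw_sm
      (hwu_int.congr (Filter.Eventually.of_forall (fun x => rfl))) hu_intν
    calc ∫ x, w x * u x ∂μ = ∫ x, w x * u x ∂ν := hstep1
      _ = ∫ x, (w * u) x ∂ν := by rfl
      _ = ∫ x, (ν[w * u|m2]) x ∂ν := (integral_condExp hm).symm
      _ = ∫ x, (w * ν[u|m2]) x ∂ν := integral_congr_ae hpull
      _ = ∫ x, w x * ρ x ∂ν := by
          refine integral_congr_ae ?_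
          filter_upwards [hrestr] with x hx
          simp only [Pi.mul_apply]
          rw [hx]
  -- combine: ∫ (v-w)² dν = 0
  have hdiff : ∫ x, (v x - w x) * u x ∂μ = 0 := by
    have : ∫ x, (v x - w x) * u x ∂μ = ∫ x, v x * u x ∂μ - ∫ x, w x * u x ∂μ := by
      rw [← integral_sub]
      · refine integral_congr_ae (Filter.Eventually.of_forall (fun x => ?_))
        ring
      · exact hu_int.bdd_mul hv.aestronglyMeasurable
          (Filter.Eventually.of_forall fun x => by rw [Real.norm_eq_abs]; exact hvbdd x)
      · have heq : (fun x => w x * u x) = G.indicator (fun x => w x * u x) := by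
          funext x
          by_cases hx : x ∈ G <;>
            simp [hu, Set.indicator_of_mem, Set.indicator_of_notMem, hx]
        rw [heq, integrable_indicator_iff hG]
        exact hwu_int
    rw [this, h1, h2, h3, h4, sub_self]
  -- conclude via vanishing of ∫ (v-w)² dν
  have hsq_eq : ∫ x, (v x - w x) * (v x - w x) ∂ν = 0 := by
    have hstep : ∫ x, (v x - w x) * u x ∂μ
        = ∫ x, (v x - w x) * (v x - w x) ∂ν := by
      calc ∫ x, (v x - w x) * u x ∂μ
          = ∫ x, G.indicator (fun y => (v y - w y) * (v y - w y)) x ∂μ := by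
            refine integral_congr_ae (Filter.Eventually.of_forall (fun x => ?_))
            by_cases hx : x ∈ G <;>
              simp [hu, Set.indicator_of_mem, Set.indicator_of_notMem, hx]
        _ = ∫ x, (v x - w x) * (v x - w x) ∂ν := integral_indicator hG
    rw [← hstep, hdiff]
  have hvw_asm : AEStronglyMeasurable (fun x => v x - w x) ν :=
    hv.aestronglyMeasurable.sub (hw_sm.mono hm).aestronglyMeasurable
  have hvw_int : Integrable (fun x => v x - w x) ν := hv_int.sub hw_int
  have hsq_int : Integrable (fun x => (v x - w x) * (v x - w x)) ν := by
    refine hvw_int.bdd_mul (c := C + C) hvw_asm ?_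
    filter_upwards [hw_bdd] with x hx
    rw [Real.norm_eq_abs]
    calc |v x - w x| ≤ |v x| + |w x| := abs_sub _ _
      _ ≤ C + C := add_le_add (hvbdd x) hx
  have hzero : (fun x => (v x - w x) * (v x - w x)) =ᵐ[ν] 0 := by
    rw [← integral_eq_zero_iff_of_nonneg_ae ?_ hsq_int]
    · exact hsq_eq
    · exact Filter.Eventually.of_forall (fun x => mul_self_nonneg _)
  filter_upwards [hzero] with x hx
  have : (v x - w x) * (v x - w x) = 0 := hx
  have := mul_self_eq_zero.mp this
  linarith

lemma v_ae_const {X : Type*} [m : MeasurableSpace X] {μ : Measure X}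
    (hinf : μ Set.univ = ⊤)
    {v : X → ℝ} {C : ℝ} (hvbdd : ∀ x, |v x| ≤ C)
    (mseq : ℕ → MeasurableSpace X)
    (hanti : ∀ {n k : ℕ}, n ≤ k → mseq k ≤ mseq n)
    (hexact : ∀ A : Set X, (∀ n, MeasurableSet[mseq n] A) → μ A = 0 ∨ μ Aᶜ = 0)
    (happrox : ∀ (n : ℕ) (a : ℝ), ∃ S : Set X, MeasurableSet[mseq n] S ∧
        μ (S \ {x | a < v x}) = 0 ∧ μ ({x | a < v x} \ S) = 0) :
    ∃ α : ℝ, v =ᵐ[μ] fun _ => α := by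
  -- dichotomy for every level set
  have hdich : ∀ a : ℝ, μ {x | a < v x} = 0 ∨ μ {x | a < v x}ᶜ = 0 := by
    intro a
    set V := {x | a < v x} with hV
    choose S hSmeas hS1 hS2 using fun n => happrox n a
    set W : ℕ → Set X := fun k => ⋃ p, ⋃ (_ : k ≤ p), S p with hW
    have hWanti : ∀ {k k' : ℕ}, k ≤ k' → W k' ⊆ W k := by
      intro k k' hkk' x hx
      obtain ⟨p, hp, hxp⟩ := by
        simpa [hW, Set.mem_iUnion] using hx
      exact Set.mem_iUnion.mpr ⟨p, Set.mem_iUnion.mpr ⟨le_trans hkk' hp, hxp⟩⟩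
    set A := ⋂ k, W k with hA
    have hAmeas : ∀ n, MeasurableSet[mseq n] A := by
      intro n
      have hshift : A = ⋂ k, W (n + k) := by
        apply Set.Subset.antisymm
        · exact fun x hx => Set.mem_iInter.mpr fun k => Set.mem_iInter.mp hx (n + k)
        · intro x hx
          refine Set.mem_iInter.mpr fun k => ?_
          exact hWanti (Nat.le_add_left k n) (Set.mem_iInter.mp hx k)
      rw [hshift]
      refine MeasurableSet.iInter (fun k => ?_)
      refine MeasurableSet.iUnion (fun p => ?_)
      refine MeasurableSet.iUnion (fun hp => ?_)
      exact hanti (le_trans (Nat.le_add_right n k) hp) _ (hSmeas p)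
    have hAV : μ (A \ V) = 0 := by
      have h1 : A \ V ⊆ ⋃ p, (S p \ V) := by
        intro x hx
        have hxA : x ∈ W 0 := Set.mem_iInter.mp hx.1 0
        obtain ⟨p, hxp⟩ := by simpa [hW, Set.mem_iUnion] using hxA
        exact Set.mem_iUnion.mpr ⟨p, hxp, hx.2⟩
      exact measure_mono_null h1 (measure_iUnion_null hS1)
    have hVA : μ (V \ A) = 0 := by
      have h1 : V \ A ⊆ ⋃ k, (V \ W k) := by
        intro x hx
        have hx2 : ¬ x ∈ ⋂ k, W k := hx.2
        obtain ⟨k, hk⟩ := not_forall.mp (fun h => hx2 (Set.mem_iInter.mpr h))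
        exact Set.mem_iUnion.mpr ⟨k, hx.1, hk⟩
      refine measure_mono_null h1 (measure_iUnion_null (fun k => ?_))
      refine measure_mono_null (fun x hx => ?_) (hS2 k)
      refine ⟨hx.1, fun hxS => hx.2 ?_⟩
      exact Set.mem_iUnion.mpr ⟨k, Set.mem_iUnion.mpr ⟨le_refl k, hxS⟩⟩
    rcases hexact A hAmeas with h | h
    · left
      have : V ⊆ (V \ A) ∪ A := by
        intro x hx
        by_cases hxA : x ∈ A
        · exact Or.inr hxA
        · exact Or.inl ⟨hx, hxA⟩
      exact measure_mono_null this (by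
        refine measure_union_null hVA h)
    · right
      have : Vᶜ ⊆ Aᶜ ∪ (A \ V) := by
        intro x hx
        by_cases hxA : x ∈ A
        · exact Or.inr ⟨hxA, hx⟩
        · exact Or.inl hxA
      exact measure_mono_null this (measure_union_null h hAV)
  -- the set of thresholds below which v is a.e. above
  set D := {a : ℝ | μ {x | a < v x}ᶜ = 0} with hD
  have hDne : D.Nonempty := by
    refine ⟨-C - 1, ?_⟩
    have hempty : {x | -C - 1 < v x}ᶜ = ∅ := by
      ext x
      simp only [Set.mem_compl_iff, Set.mem_setOf_eq, not_lt, Set.mem_empty_iff_false,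
        iff_false, not_le]
      have := abs_le.mp (hvbdd x)
      linarith
    rw [hD, Set.mem_setOf_eq, hempty, measure_empty]
  have hDbdd : BddAbove D := by
    refine ⟨C, fun a ha => ?_⟩
    by_contra hlt
    push_neg at hlt
    have hempty : {x | a < v x} = ∅ := by
      ext x
      simp only [Set.mem_setOf_eq, Set.mem_empty_iff_false, iff_false, not_lt]
      have := abs_le.mp (hvbdd x)
      linarith
    have : μ {x | a < v x}ᶜ = 0 := ha
    rw [hempty, Set.compl_empty] at this
    rw [this] at hinf
    exact (ENNReal.top_ne_zero hinf.symm).elim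
  set α := sSup D with hα
  have hup : ∀ b : ℝ, α < b → μ {x | b < v x} = 0 := by
    intro b hb
    rcases hdich b with h | h
    · exact h
    · exact absurd (le_csSup hDbdd h) (not_le.mpr hb)
  have hdown : ∀ b : ℝ, b < α → μ {x | v x ≤ b} = 0 := by
    intro b hb
    obtain ⟨a, haD, hba⟩ := exists_lt_of_lt_csSup hDne hb
    have h1 : {x | v x ≤ b} ⊆ {x | a < v x}ᶜ := by
      intro x hx
      simp only [Set.mem_compl_iff, Set.mem_setOf_eq, not_lt]
      exact le_trans hx (le_of_lt hba)
    exact measure_mono_null h1 haD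
  refine ⟨α, ?_⟩
  rw [Filter.EventuallyEq, ae_iff]
  have hsub : {x | ¬ v x = α} ⊆
      (⋃ (q : ℚ) (_ : α < (q:ℝ)), {x | (q:ℝ) < v x}) ∪
      (⋃ (q : ℚ) (_ : (q:ℝ) < α), {x | v x ≤ (q:ℝ)}) := by
    intro x hx
    rcases lt_or_gt_of_ne (hx : v x ≠ α) with h | h
    · obtain ⟨q, hq1, hq2⟩ := exists_rat_btwn h
      refine Or.inr (Set.mem_iUnion.mpr ⟨q, Set.mem_iUnion.mpr ⟨hq2, le_of_lt hq1⟩⟩)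
    · obtain ⟨q, hq1, hq2⟩ := exists_rat_btwn h
      refine Or.inl (Set.mem_iUnion.mpr ⟨q, Set.mem_iUnion.mpr ⟨hq1, hq2⟩⟩)
  refine measure_mono_null hsub (measure_union_null ?_ ?_)
  · refine measure_iUnion_null (fun q => ?_)
    by_cases hq : α < (q:ℝ)
    · simpa [hq] using hup q hq
    · simp [hq]
  · refine measure_iUnion_null (fun q => ?_)
    by_cases hq : (q:ℝ) < α
    · simpa [hq] using hdown q hq
    · simp [hq]

/-- If the measure-preserving system `(X, 𝒜, μ, T)` (with `μ` σ-finite and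
`μ(X) = ∞`) is exact, i.e. the tail σ-algebra `⋂ₙ T⁻ⁿ𝒜` is trivial mod `μ`, then for
every `F ∈ L^∞` and every `g ∈ L¹` with `∫ g dμ = 0`, `∫ (F∘Tⁿ)·g dμ → 0`. -/
theorem exact_implies_GLM1
    {X : Type*} [m : MeasurableSpace X] (μ : Measure X) [SigmaFinite μ]
    (T : X → X) (hT : MeasurePreserving T μ μ)
    (hinf : μ Set.univ = ⊤)
    -- exactness: any set measurable w.r.t. every `T⁻ⁿ𝒜` is trivial mod μ
    (hexact : ∀ A : Set X,
      (∀ n : ℕ, MeasurableSet[MeasurableSpace.comap (T^[n]) m] A) →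
      μ A = 0 ∨ μ Aᶜ = 0) :
    ∀ F : X → ℝ, Measurable F → (∃ C, ∀ x, |F x| ≤ C) →
    ∀ g : X → ℝ, Integrable g μ → (∫ x, g x ∂μ) = 0 →
    Tendsto (fun n : ℕ => ∫ x, F (T^[n] x) * g x ∂μ) atTop (nhds 0) := by
  intro F hF hFC g hg hg0
  obtain ⟨C₀, hC₀⟩ := hFC
  set C := |C₀| with hCdef
  have hC : ∀ x, |F x| ≤ C := fun x => (hC₀ x).trans (le_abs_self C₀)
  have hC0 : 0 ≤ C := abs_nonneg _
  rw [tendsto_iff_ultrafilter]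
  intro 𝒰 h𝒰
  -- basic data
  have hφmeas : ∀ n : ℕ, Measurable (fun x => F (T^[n] x)) :=
    fun n => hF.comp (hT.measurable.iterate n)
  have hφbdd : ∀ (n : ℕ) (x : X), |F (T^[n] x)| ≤ C := fun n x => hC _
  set J : (X → ℝ) → ℕ → ℝ := fun f n => ∫ x, F (T^[n] x) * f x ∂μ with hJ
  set Λ : (X → ℝ) → ℝ := fun f => limUnder (𝒰 : Filter ℕ) (J f) with hΛ
  have hJbdd : ∀ f, Integrable f μ → ∀ n, |J f n| ≤ C * ∫ x, |f x| ∂μ := fun f hf n =>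
    abs_integral_bdd_mul_le (hφmeas n) (hφbdd n) hC0 hf
  have hΛtend : ∀ f, Integrable f μ → Tendsto (J f) 𝒰 (𝓝 (Λ f)) := fun f hf =>
    ultra_tendsto_limUnder (hJbdd f hf) 𝒰
  -- goal reduces to Λ g = 0
  suffices hzero : Λ g = 0 by
    have := hΛtend g hg
    rwa [hzero] at this
  -- Λ is bounded, additive, homogeneous, a.e.-invariant
  have hbound : ∀ f, Integrable f μ → |Λ f| ≤ C * ∫ x, |f x| ∂μ := by
    intro f hf
    exact le_of_tendsto (hΛtend f hf).abs (Filter.Eventually.of_forall (hJbdd f hf))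
  have hJint : ∀ (f : X → ℝ), Integrable f μ → ∀ n : ℕ,
      Integrable (fun x => F (T^[n] x) * f x) μ := fun f hf n =>
    hf.bdd_mul (hφmeas n).aestronglyMeasurable
      (Filter.Eventually.of_forall fun x => by rw [Real.norm_eq_abs]; exact hφbdd n x)
  have hadd : ∀ f g', Integrable f μ → Integrable g' μ → Λ (f + g') = Λ f + Λ g' := by
    intro f g' hf hg'
    have h1 : J (f + g') = fun n => J f n + J g' n := by
      funext n
      show ∫ x, F (T^[n] x) * (f + g') x ∂μ = _
      rw [← integral_add (hJint f hf n) (hJint g' hg' n)]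
      refine integral_congr_ae (Filter.Eventually.of_forall (fun x => ?_))
      simp only [Pi.add_apply]
      ring
    have h2 : Tendsto (J (f + g')) 𝒰 (𝓝 (Λ f + Λ g')) := by
      rw [h1]
      exact (hΛtend f hf).add (hΛtend g' hg')
    exact tendsto_nhds_unique (hΛtend (f + g') (hf.add hg')) h2
  have hsmul : ∀ (c : ℝ) (f : X → ℝ), Integrable f μ → Λ (c • f) = c * Λ f := by
    intro c f hf
    have h1 : J (c • f) = fun n => c * J f n := by
      funext n
      show ∫ x, F (T^[n] x) * (c • f) x ∂μ = _
      rw [← integral_const_mul]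
      refine integral_congr_ae (Filter.Eventually.of_forall (fun x => ?_))
      simp only [Pi.smul_apply, smul_eq_mul]
      ring
    have h2 : Tendsto (J (c • f)) 𝒰 (𝓝 (c * Λ f)) := by
      rw [h1]
      exact (hΛtend f hf).const_mul c
    exact tendsto_nhds_unique (hΛtend (c • f) (hf.smul c)) h2
  have hcongr : ∀ f g' : X → ℝ, f =ᵐ[μ] g' → Λ f = Λ g' := by
    intro f g' hae
    have h1 : J f = J g' := by
      funext n
      refine integral_congr_ae ?_
      filter_upwards [hae] with x hx
      rw [hx]
    show limUnder (𝒰 : Filter ℕ) (J f) = limUnder (𝒰 : Filter ℕ) (J g')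
    rw [h1]
  -- the σ-algebras
  set mseq : ℕ → MeasurableSpace X := fun n => MeasurableSpace.comap (T^[n]) m with hmseq
  have hle : ∀ n, mseq n ≤ m := fun n => comap_le_of_measurable hT.measurable n
  haveI hsf : ∀ n, SigmaFinite (μ.trim (hle n)) := fun n => sigmaFinite_trim_comap μ hT n
  -- Λ-invariance under conditional expectation
  have hΛinv : ∀ (n : ℕ) (f : X → ℝ), Integrable f μ → Λ (μ[f| mseq n]) = Λ f := by
    intro n f hf
    have hEint : Integrable (μ[f| mseq n]) μ := integrable_condExp
    have hev : J (μ[f| mseq n]) =ᶠ[(𝒰 : Filter ℕ)] J f := by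
      have hatTop : ∀ᶠ k in atTop, J (μ[f| mseq n]) k = J f k := by
        rw [eventually_atTop]
        exact ⟨n, fun k hk => pullout_integral hT hF hC hf hk⟩
      exact h𝒰 hatTop
    have h2 : Tendsto (J (μ[f| mseq n])) 𝒰 (𝓝 (Λ f)) :=
      (hΛtend f hf).congr' hev.symm
    exact tendsto_nhds_unique (hΛtend _ hEint) h2
  -- representation of Λ
  obtain ⟨v, hvmeas, hvbdd, hvrep⟩ := glue_repr μ hC0 Λ hbound hadd hsmul hcongr
  -- invariance identity for v
  have hvinv : ∀ n : ℕ, ∀ f : X → ℝ, Integrable f μ →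
      ∫ x, v x * f x ∂μ = ∫ x, v x * (μ[f| mseq n]) x ∂μ := by
    intro n f hf
    rw [← hvrep f hf, ← hvrep _ (integrable_condExp), hΛinv n f hf]
  -- approximation of level sets of v by mseq n - measurable sets
  have happrox : ∀ (n : ℕ) (a : ℝ), ∃ S : Set X, MeasurableSet[mseq n] S ∧
      μ (S \ {x | a < v x}) = 0 ∧ μ ({x | a < v x} \ S) = 0 := by
    intro n a
    -- pieces of the mseq n algebra
    set G : ℕ → Set X := fun j => T^[n] ⁻¹' (spanningSets μ j) with hG
    have hGm2 : ∀ j, MeasurableSet[mseq n] (G j) :=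
      fun j => ⟨spanningSets μ j, measurableSet_spanningSets μ j, rfl⟩
    have hGm : ∀ j, MeasurableSet (G j) := fun j => hle n _ (hGm2 j)
    have hGfin : ∀ j, μ (G j) < ⊤ := by
      intro j
      rw [hG]
      rw [(hT.iterate n).measure_preimage (measurableSet_spanningSets μ j).nullMeasurableSet]
      exact measure_spanningSets_lt_top μ j
    have hGcover : (⋃ j, G j) = Set.univ := by
      rw [hG, ← Set.preimage_iUnion, iUnion_spanningSets, Set.preimage_univ]
    -- conditional expectations of v on the pieces
    set w : ℕ → X → ℝ := fun j => (μ.restrict (G j))[v | mseq n] with hw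
    have hw_sm : ∀ j, StronglyMeasurable[mseq n] (w j) := fun j => stronglyMeasurable_condExp
    have hw_ae : ∀ j, v =ᵐ[μ.restrict (G j)] w j := by
      intro j
      exact vmeas_on_piece (hle n) hvmeas hC0 hvbdd (hvinv n) (hGm2 j) (hGfin j)
    have hwnull : ∀ j, μ ({x | v x ≠ w j x} ∩ G j) = 0 := by
      intro j
      have h1 := hw_ae j
      rw [Filter.EventuallyEq, ae_iff, Measure.restrict_apply' (hGm j)] at h1
      exact h1
    refine ⟨⋃ j, (G j ∩ {x | a < w j x}), ?_, ?_, ?_⟩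
    · refine MeasurableSet.iUnion (fun j => ?_)
      exact (hGm2 j).inter (measurableSet_lt (@measurable_const ℝ X _ (mseq n) a)
        (hw_sm j).measurable)
    · refine measure_mono_null (fun x hx => ?_)
        (measure_iUnion_null (fun j => hwnull j))
      obtain ⟨hxS, hxV⟩ := hx
      obtain ⟨j, hxG, hxw⟩ := by
        simpa [Set.mem_iUnion] using hxS
      refine Set.mem_iUnion.mpr ⟨j, ?_, hxG⟩
      rw [Set.mem_setOf_eq] at hxV ⊢
      intro hvw
      rw [not_lt] at hxV
      rw [hvw] at hxV
      exact absurd hxw (not_lt.mpr hxV)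
    · refine measure_mono_null (fun x hx => ?_)
        (measure_iUnion_null (fun j => hwnull j))
      obtain ⟨hxV, hxS⟩ := hx
      have hxU : x ∈ ⋃ j, G j := hGcover ▸ Set.mem_univ x
      obtain ⟨j, hxG⟩ := Set.mem_iUnion.mp hxU
      refine Set.mem_iUnion.mpr ⟨j, ?_, hxG⟩
      rw [Set.mem_setOf_eq]
      intro hvw
      refine hxS (Set.mem_iUnion.mpr ⟨j, hxG, ?_⟩)
      rw [Set.mem_setOf_eq, ← hvw]
      exact hxV
  -- v is a.e. constant
  obtain ⟨α, hvconst⟩ := v_ae_const hinf hvbdd mseq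
    (fun {n k} hnk => comap_antitone hT.measurable hnk) hexact happrox
  -- conclude
  rw [hvrep g hg]
  calc ∫ x, v x * g x ∂μ = ∫ x, α * g x ∂μ := by
        refine integral_congr_ae ?_
        filter_upwards [hvconst] with x hx
        rw [hx]
    _ = α * ∫ x, g x ∂μ := integral_const_mul α _
    _ = 0 := by rw [hg0, mul_zero]
end

section
/- Let (X, 𝒜, μ, T) be an exact (hence ergodic) measure-preserving system on a σ-finite measure space with μ(X) = ∞ and 𝒜 nontrivial mod μ. Then for every f ∈ L¹(μ) ∩ L^∞(μ) and every g ∈ L¹(μ), lim_{n→∞} ∫_X (f∘Tⁿ)·g dμ = 0. In particular, for all sets A, B of finite measure, μ(T⁻ⁿA ∩ B) → 0 (T is of zero type). -/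
open MeasureTheory Filter Topology
open Metric


theorem weak_lemma {H : Type*} [NormedAddCommGroup H] [InnerProductSpace ℝ H] [CompleteSpace H]
    (V : ℕ → Submodule ℝ H) (hVc : ∀ m, IsClosed (V m : Set H))
    (u : ℕ → H) (C : ℝ) (hub : ∀ n, ‖u n‖ ≤ C)
    (huV : ∀ m n, m ≤ n → u n ∈ V m)
    (htriv : ∀ h : H, (∀ m, h ∈ V m) → h = 0)
    (g : H) :
    Tendsto (fun n => (inner ℝ (u n) g : ℝ)) atTop (nhds 0) := by
  by_contra hcon
  rw [Metric.tendsto_atTop] at hcon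
  push_neg at hcon
  obtain ⟨ε, hε, hfreq⟩ := hcon
  set ι : H → WeakDual ℝ H := fun x => StrongDual.toWeakDual (InnerProductSpace.toDual ℝ H x) with hι
  have hιapp : ∀ x y : H, ι x y = (inner ℝ x y : ℝ) := fun x y => rfl
  set S : ℕ → Set H := fun N => u '' {n | N ≤ n ∧ ε ≤ |(inner ℝ (u n) g : ℝ)|} with hS
  set K : ℕ → Set (WeakDual ℝ H) := fun N => closure (ι '' S N) with hK
  -- ball facts
  have hball : IsCompact (WeakDual.toStrongDual ⁻¹' closedBall (0 : StrongDual ℝ H) C) :=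
    WeakDual.isCompact_closedBall (𝕜 := ℝ) 0 C
  have hballc : IsClosed (WeakDual.toStrongDual ⁻¹' closedBall (0 : StrongDual ℝ H) C) :=
    hball.isClosed
  have hsub : ∀ N, ι '' S N ⊆ WeakDual.toStrongDual ⁻¹' closedBall (0 : StrongDual ℝ H) C := by
    rintro N _ ⟨x, ⟨n, _, rfl⟩, rfl⟩
    simp only [Set.mem_preimage, mem_closedBall, dist_zero_right]
    calc ‖(InnerProductSpace.toDual ℝ H) (u n)‖ = ‖u n‖ := by simp
      _ ≤ C := hub n
  have hKsub : ∀ N, K N ⊆ WeakDual.toStrongDual ⁻¹' closedBall (0 : StrongDual ℝ H) C :=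
    fun N => closure_minimal (hsub N) hballc
  have hKcompact : ∀ N, IsCompact (K N) := fun N =>
    hball.of_isClosed_subset isClosed_closure (hKsub N)
  have hKne : ∀ N, (K N).Nonempty := by
    intro N
    obtain ⟨n, hn, hd⟩ := hfreq N
    rw [Real.dist_0_eq_abs] at hd
    exact ⟨ι (u n), subset_closure ⟨u n, ⟨n, ⟨hn, hd⟩, rfl⟩, rfl⟩⟩
  have hKdec : ∀ N, K (N + 1) ⊆ K N := by
    intro N
    apply closure_mono
    rintro _ ⟨_, ⟨n, ⟨hn, hd⟩, rfl⟩, rfl⟩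
    exact ⟨u n, ⟨n, ⟨Nat.le_of_succ_le hn, hd⟩, rfl⟩, rfl⟩
  obtain ⟨φ, hφ⟩ := IsCompact.nonempty_iInter_of_sequence_nonempty_isCompact_isClosed
    K hKdec hKne (hKcompact 0) (fun N => isClosed_closure)
  simp only [Set.mem_iInter] at hφ
  -- φ ∈ ι '' (V N)
  have hVclosed : ∀ N, IsClosed {ψ : WeakDual ℝ H | ∀ y ∈ (V N)ᗮ, ψ y = 0} := by
    intro N
    have : {ψ : WeakDual ℝ H | ∀ y ∈ (V N)ᗮ, ψ y = 0} = ⋂ y ∈ (V N)ᗮ, {ψ : WeakDual ℝ H | ψ y = 0} := by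
      ext ψ; simp
    rw [this]
    exact isClosed_biInter fun y _ =>
      isClosed_singleton.preimage (WeakDual.eval_continuous y)
  have hVeq : ∀ N, ι '' (V N : Set H) = {ψ : WeakDual ℝ H | ∀ y ∈ (V N)ᗮ, ψ y = 0} := by
    intro N
    haveI : CompleteSpace (V N) := (hVc N).completeSpace_coe
    ext ψ
    constructor
    · rintro ⟨x, hx, rfl⟩ y hy
      rw [hιapp, real_inner_comm]
      exact (Submodule.mem_orthogonal' _ _).1 hy x hx
    · intro hψ
      have hx : (InnerProductSpace.toDual ℝ H).symm ψ ∈ (V N)ᗮᗮ := by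
        rw [Submodule.mem_orthogonal]
        intro y hy
        have h2 := hψ y hy
        have h3 : (InnerProductSpace.toDual ℝ H) ((InnerProductSpace.toDual ℝ H).symm ψ) y = ψ y := by
          exact congrArg (fun φ : StrongDual ℝ H => φ y) ((InnerProductSpace.toDual ℝ H).apply_symm_apply ψ)
        rw [real_inner_comm, ← InnerProductSpace.toDual_apply_apply, h3]
        exact h2
      rw [Submodule.orthogonal_orthogonal (V N)] at hx
      exact ⟨(InnerProductSpace.toDual ℝ H).symm ψ, hx, by exact (InnerProductSpace.toDual ℝ H).apply_symm_apply ψ⟩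
  have hφV : ∀ N, φ ∈ ι '' (V N : Set H) := by
    intro N
    rw [hVeq N]
    have hKVN : K N ⊆ {ψ : WeakDual ℝ H | ∀ y ∈ (V N)ᗮ, ψ y = 0} := by
      apply closure_minimal _ (hVclosed N)
      rintro _ ⟨_, ⟨n, hn, rfl⟩, rfl⟩
      rw [← hVeq N]
      exact ⟨u n, huV N n hn.1, rfl⟩
    exact hKVN (hφ N)
  have hιinj : Function.Injective ι := fun a b h => by
    have := (InnerProductSpace.toDual ℝ H).injective (by exact_mod_cast h)
    exact this
  obtain ⟨h0, hh0, hφ0⟩ := hφV 0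
  have hhV : ∀ N, h0 ∈ V N := by
    intro N
    obtain ⟨hN, hhN, hφN⟩ := hφV N
    have : hN = h0 := hιinj (hφN.trans hφ0.symm)
    rwa [this] at hhN
  have hzero : h0 = 0 := htriv h0 hhV
  -- contradiction with ε
  have hεset : K 0 ⊆ {ψ : WeakDual ℝ H | ε ≤ |ψ g|} := by
    apply closure_minimal _ ?_
    · rintro _ ⟨_, ⟨n, hn, rfl⟩, rfl⟩
      simpa [hιapp] using hn.2
    · have : Continuous fun ψ : WeakDual ℝ H => |ψ g| :=
        (WeakDual.eval_continuous g).abs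
      exact isClosed_le continuous_const this
  have := hεset (hφ 0)
  rw [← hφ0, hzero] at this
  simp only [hιapp, Set.mem_setOf_eq] at this
  simp at this
  linarith


section Tail
variable {X : Type*} [m : MeasurableSpace X] {T : X → X}

theorem comap_mono' (hTm : Measurable T) {n k : ℕ} (hnk : n ≤ k) {A : Set X}
    (hA : MeasurableSet[MeasurableSpace.comap (T^[k]) m] A) :
    MeasurableSet[MeasurableSpace.comap (T^[n]) m] A := by
  obtain ⟨B, hB, rfl⟩ := hA
  refine ⟨(T^[k - n]) ⁻¹' B, (hTm.iterate (k - n)) hB, ?_⟩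
  rw [← Set.preimage_comp, ← Function.iterate_add T (k-n) n, Nat.sub_add_cancel hnk]

theorem tail_trivial (μ : Measure X) (hTm : Measurable T)
    (hexact : ∀ A : Set X,
      (∀ n : ℕ, MeasurableSet[MeasurableSpace.comap (T^[n]) m] A) →
      μ A = 0 ∨ μ Aᶜ = 0)
    (S : Set X)
    (hS : ∀ k : ℕ, ∃ Sk : Set X,
      MeasurableSet[MeasurableSpace.comap (T^[k]) m] Sk ∧ S =ᵐ[μ] Sk) :
    μ S = 0 ∨ μ Sᶜ = 0 := by
  choose Sk hSkm hSkae using hS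
  set U : ℕ → Set X := fun N => ⋃ j : ℕ, Sk (N + j) with hU
  have hUae : ∀ N, U N =ᵐ[μ] S := by
    intro N
    rw [ae_eq_set]
    constructor
    · have h1 : U N \ S = ⋃ j, (Sk (N + j) \ S) := Set.iUnion_diff S fun j => Sk (N + j)
      rw [h1]
      exact measure_iUnion_null fun j => (ae_eq_set.1 (hSkae (N + j))).2
    · refine measure_mono_null (fun x hx => ?_) (ae_eq_set.1 (hSkae (N + 0))).1
      exact ⟨hx.1, fun hmem => hx.2 (Set.mem_iUnion.2 ⟨0, hmem⟩)⟩
  have hUanti : Antitone U := by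
    intro a b hab x hx
    obtain ⟨j, hj⟩ := Set.mem_iUnion.1 hx
    have : b + j = a + (b - a + j) := by omega
    rw [this] at hj
    exact Set.mem_iUnion.2 ⟨b - a + j, hj⟩
  have hUm : ∀ N, MeasurableSet[MeasurableSpace.comap (T^[N]) m] (U N) :=
    fun N => MeasurableSet.iUnion fun j => comap_mono' hTm (Nat.le_add_right N j) (hSkm (N + j))
  set Sstar : Set X := ⋂ N, U N with hSstar
  have hSm : ∀ n : ℕ, MeasurableSet[MeasurableSpace.comap (T^[n]) m] Sstar := by
    intro n
    have heq : Sstar = ⋂ N, U (n + N) := by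
      apply Set.Subset.antisymm
      · exact Set.subset_iInter fun N => Set.iInter_subset U (n + N)
      · intro x hx
        refine Set.mem_iInter.2 fun M => ?_
        exact hUanti (Nat.le_add_left M n) (Set.mem_iInter.1 hx M)
    rw [heq]
    exact MeasurableSet.iInter fun N => comap_mono' hTm (Nat.le_add_right n N) (hUm (n + N))
  have hae : S =ᵐ[μ] Sstar := by
    rw [ae_eq_set]
    constructor
    · have h1 : S \ Sstar = ⋃ N, (S \ U N) := Set.diff_iInter S U
      rw [h1]
      exact measure_iUnion_null fun N => (ae_eq_set.1 (hUae N)).2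
    · exact measure_mono_null (Set.diff_subset_diff_left (Set.iInter_subset U 0))
        (ae_eq_set.1 (hUae 0)).1
  rcases hexact Sstar hSm with h | h
  · left; rw [measure_congr hae]; exact h
  · right; exact (measure_congr (ae_eq_set_compl_compl.2 hae)).trans h
end Tail

section Vanish
variable {X : Type*} [m : MeasurableSpace X] {T : X → X}

theorem vanish_lemma (μ : Measure X) (hTm : Measurable T)
    (hinf : μ Set.univ = ⊤)
    (hexact : ∀ A : Set X,
      (∀ n : ℕ, MeasurableSet[MeasurableSpace.comap (T^[n]) m] A) →
      μ A = 0 ∨ μ Aᶜ = 0)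
    (h : X → ℝ) (hmh : Measurable h)
    (hsq : Integrable (fun x => h x ^ 2) μ)
    (hmem : ∀ k : ℕ, ∃ w : X → ℝ, Measurable w ∧ h =ᵐ[μ] w ∘ T^[k]) :
    h =ᵐ[μ] 0 := by
  have key : ∀ ε : ℝ, 0 < ε → μ {x | ε ≤ |h x|} = 0 := by
    intro ε hε
    set S := {x | ε ≤ |h x|} with hSdef
    have htail := tail_trivial μ hTm hexact S ?_
    · rcases htail with h0 | h1
      · exact h0
      · exfalso
        have hfin : μ S < ⊤ := by
          have hsub : S ⊆ {x | ε ^ 2 ≤ h x ^ 2} := by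
            intro x hx
            have : ε ^ 2 ≤ |h x| ^ 2 := by
              apply pow_le_pow_left₀ hε.le hx
            simpa [sq_abs] using this
          exact lt_of_le_of_lt (measure_mono hsub)
            (hsq.measure_ge_lt_top (by positivity))
        have : μ Set.univ ≤ μ S + μ Sᶜ := by
          rw [← Set.union_compl_self S]
          exact measure_union_le S Sᶜ
        rw [hinf, h1, add_zero] at this
        exact (lt_irrefl ⊤ (lt_of_le_of_lt this hfin))
    · intro k
      obtain ⟨w, hwm, hwae⟩ := hmem k
      refine ⟨T^[k] ⁻¹' {y | ε ≤ |w y|}, ⟨{y | ε ≤ |w y|},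
        measurableSet_le measurable_const hwm.abs, rfl⟩, ?_⟩
      rw [eventuallyEq_set]
      filter_upwards [hwae] with x hx
      simp only [hSdef, Set.mem_setOf_eq, Set.mem_preimage, hx, Function.comp_apply]
  have hsub : {x | h x ≠ 0} ⊆ ⋃ n : ℕ, {x | (1:ℝ)/(n+1) ≤ |h x|} := by
    intro x hx
    obtain ⟨n, hn⟩ := exists_nat_one_div_lt (abs_pos.2 hx)
    exact Set.mem_iUnion.2 ⟨n, le_of_lt hn⟩
  have : μ {x | h x ≠ 0} = 0 :=
    measure_mono_null hsub (measure_iUnion_null fun n => key _ (by positivity))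
  rw [Filter.EventuallyEq, ae_iff]
  simpa using this
end Vanish

section Corr
variable {X : Type*} [m : MeasurableSpace X] {T : X → X}

theorem corr_L2 (μ : Measure X) (hT : MeasurePreserving T μ μ)
    (hinf : μ Set.univ = ⊤)
    (hexact : ∀ A : Set X,
      (∀ n : ℕ, MeasurableSet[MeasurableSpace.comap (T^[n]) m] A) →
      μ A = 0 ∨ μ Aᶜ = 0)
    (f g : X → ℝ) (hf : MemLp f 2 μ) (hg : MemLp g 2 μ) :
    Tendsto (fun n : ℕ => ∫ x, f (T^[n] x) * g x ∂μ) atTop (nhds 0) := by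
  set fL : Lp ℝ 2 μ := hf.toLp f with hfL
  set gL : Lp ℝ 2 μ := hg.toLp g with hgL
  set u : ℕ → Lp ℝ 2 μ := fun n => Lp.compMeasurePreserving (T^[n]) (hT.iterate n) fL with hu
  set V : ℕ → Submodule ℝ (Lp ℝ 2 μ) :=
    fun k => LinearMap.range (Lp.compMeasurePreservingₗ ℝ (T^[k]) (hT.iterate k)) with hV
  have hVc : ∀ k, IsClosed ((V k : Set (Lp ℝ 2 μ))) := by
    intro k
    have heq : (V k : Set (Lp ℝ 2 μ)) =
        Set.range (Lp.compMeasurePreserving (T^[k]) (hT.iterate k) : Lp ℝ 2 μ → Lp ℝ 2 μ) := by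
      ext x
      simp only [hV, SetLike.mem_coe, LinearMap.mem_range, Set.mem_range]
      rfl
    rw [heq]
    exact (Lp.isometry_compMeasurePreserving (hT.iterate k)).isClosedEmbedding.isClosed_range
  -- coeFn of u n
  have hucoe : ∀ n : ℕ, (u n : X → ℝ) =ᵐ[μ] f ∘ T^[n] := by
    intro n
    refine (Lp.coeFn_compMeasurePreserving fL (hT.iterate n)).trans ?_
    exact (hT.iterate n).quasiMeasurePreserving.ae_eq_comp hf.coeFn_toLp
  have huV : ∀ k n, k ≤ n → u n ∈ V k := by
    intro k n hkn
    refine ⟨Lp.compMeasurePreserving (T^[n - k]) (hT.iterate (n - k)) fL, ?_⟩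
    apply Lp.ext
    refine (Lp.coeFn_compMeasurePreserving _ (hT.iterate k)).trans ?_
    have h1 : ((Lp.compMeasurePreserving (T^[n - k]) (hT.iterate (n - k)) fL : Lp ℝ 2 μ) : X → ℝ)
        =ᵐ[μ] (fL : X → ℝ) ∘ T^[n - k] := Lp.coeFn_compMeasurePreserving fL (hT.iterate (n - k))
    refine ((hT.iterate k).quasiMeasurePreserving.ae_eq_comp h1).trans ?_
    have h2 : ((fL : X → ℝ) ∘ T^[n - k]) ∘ T^[k] = (fL : X → ℝ) ∘ T^[n] := by
      funext x
      simp only [Function.comp_apply]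
      rw [← Function.iterate_add_apply T (n - k) k x, Nat.sub_add_cancel hkn]
    rw [h2]
    exact (Lp.coeFn_compMeasurePreserving fL (hT.iterate n)).symm
  have htriv : ∀ hL : Lp ℝ 2 μ, (∀ k, hL ∈ V k) → hL = 0 := by
    intro hL hmemV
    have hvan : (hL : X → ℝ) =ᵐ[μ] 0 := by
      apply vanish_lemma μ hT.measurable hinf hexact _ (Lp.stronglyMeasurable hL).measurable
      · exact (memLp_two_iff_integrable_sq (Lp.aestronglyMeasurable hL)).1 (Lp.memLp hL)
      · intro k
        obtain ⟨z, hz⟩ := hmemV k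
        refine ⟨(z : X → ℝ), (Lp.stronglyMeasurable z).measurable, ?_⟩
        have : (Lp.compMeasurePreservingₗ ℝ (T^[k]) (hT.iterate k) z : X → ℝ)
            =ᵐ[μ] (z : X → ℝ) ∘ T^[k] := Lp.coeFn_compMeasurePreserving z (hT.iterate k)
        rw [hz] at this
        exact this
    exact Lp.ext (hvan.trans (Lp.coeFn_zero ℝ 2 μ).symm)
  have hub : ∀ n, ‖u n‖ ≤ ‖fL‖ := fun n =>
    le_of_eq (Lp.norm_compMeasurePreserving fL (hT.iterate n))
  have hmain := weak_lemma V hVc u ‖fL‖ hub huV htriv gL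
  refine hmain.congr fun n => ?_
  rw [MeasureTheory.L2.inner_def]
  refine integral_congr_ae ?_
  filter_upwards [hucoe n, hg.coeFn_toLp] with x h1 h2
  simp [RCLike.inner_apply, h1, h2, hgL, mul_comm]
end Corr

section Approx
theorem approx_lemma {X : Type*} [m : MeasurableSpace X] (μ : Measure X) [SigmaFinite μ]
    (g : X → ℝ) (hg : Integrable g μ) (hgm : Measurable g) (ε : ℝ) (hε : 0 < ε) :
    ∃ b : X → ℝ, Measurable b ∧ MemLp b 2 μ ∧ Integrable b μ ∧ ∫ x, |g x - b x| ∂μ < ε := by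
  set b : ℕ → X → ℝ :=
    fun k => Set.indicator {x | x ∈ spanningSets μ k ∧ |g x| ≤ (k:ℝ)} g with hb
  have hsm : ∀ k : ℕ, MeasurableSet {x | x ∈ spanningSets μ k ∧ |g x| ≤ (k:ℝ)} := by
    intro k
    have : {x | x ∈ spanningSets μ k ∧ |g x| ≤ (k:ℝ)} =
        spanningSets μ k ∩ {x | |g x| ≤ (k:ℝ)} := rfl
    rw [this]
    exact (measurableSet_spanningSets μ k).inter (measurableSet_le hgm.abs measurable_const)
  have hbm : ∀ k, Measurable (b k) := fun k => hgm.indicator (hsm k)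
  have hble : ∀ k x, |b k x| ≤ |g x| := by
    intro k x
    by_cases hx : x ∈ {x | x ∈ spanningSets μ k ∧ |g x| ≤ (k:ℝ)} <;>
      simp [hb, Set.indicator_of_mem, Set.indicator_of_notMem, hx]
  have hblek : ∀ k x, |b k x| ≤ (k:ℝ) := by
    intro k x
    by_cases hx : x ∈ {x | x ∈ spanningSets μ k ∧ |g x| ≤ (k:ℝ)}
    · simpa [hb, Set.indicator_of_mem, hx] using hx.2
    · simp [hb, Set.indicator_of_notMem, hx, Nat.cast_nonneg]
  have hbi : ∀ k, Integrable (b k) μ := fun k =>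
    hg.abs.mono' (hbm k).aestronglyMeasurable (ae_of_all _ fun x => by
      simpa [Real.norm_eq_abs] using hble k x)
  have hb2 : ∀ k, MemLp (b k) 2 μ := by
    intro k
    refine (memLp_two_iff_integrable_sq (hbm k).aestronglyMeasurable).2 ?_
    refine (hg.abs.const_mul (k:ℝ)).mono' ((hbm k).pow_const 2).aestronglyMeasurable
      (ae_of_all _ fun x => ?_)
    have : ‖b k x ^ 2‖ = |b k x| * |b k x| := by
      rw [Real.norm_eq_abs, abs_pow, sq]
    rw [this]
    exact mul_le_mul (hblek k x) (hble k x) (abs_nonneg _) (Nat.cast_nonneg k)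
  have htend : Tendsto (fun k => ∫ x, |g x - b k x| ∂μ) atTop (nhds 0) := by
    have h0 : (0:ℝ) = ∫ _x, (0:ℝ) ∂μ := by simp
    rw [h0]
    apply tendsto_integral_of_dominated_convergence (fun x => 2 * |g x|)
    · exact fun k => (hgm.sub (hbm k)).abs.aestronglyMeasurable
    · exact hg.abs.const_mul 2
    · refine fun k => ae_of_all _ fun x => ?_
      rw [Real.norm_eq_abs, abs_abs]
      calc |g x - b k x| ≤ |g x| + |b k x| := abs_sub _ _
        _ ≤ |g x| + |g x| := by linarith [hble k x]
        _ = 2 * |g x| := by ring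
    · refine ae_of_all _ fun x => ?_
      have hev : ∀ᶠ k : ℕ in atTop, |g x - b k x| = 0 := by
        obtain ⟨k₁, hk₁⟩ := exists_nat_ge (|g x|)
        filter_upwards [eventually_mem_spanningSets μ x, eventually_ge_atTop k₁] with k hk hk'
        have hmem : x ∈ {x | x ∈ spanningSets μ k ∧ |g x| ≤ (k:ℝ)} :=
          ⟨hk, hk₁.trans (Nat.cast_le.2 hk')⟩
        simp [hb, Set.indicator_of_mem, hmem]
      exact Tendsto.congr' (hev.mono fun k h => h.symm) tendsto_const_nhds
  have := (htend.eventually (gt_mem_nhds hε)).exists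
  obtain ⟨k, hk⟩ := this
  exact ⟨b k, hbm k, hb2 k, hbi k, hk⟩
end Approx


/-- Theorem 3.3(b): If the measure-preserving system is exact, with `μ`
σ-finite, `μ(X) = ∞` and `𝒜` nontrivial mod `μ`, then for every `f ∈ L¹ ∩ L^∞` and
every `g ∈ L¹`, `∫(f∘Tⁿ)·g dμ → 0`; in particular `μ(T⁻ⁿA ∩ B) → 0` for all
finite-measure sets `A, B` (zero type). -/
theorem exact_implies_LLM
    {X : Type*} [m : MeasurableSpace X] (μ : Measure X) [SigmaFinite μ]
    (T : X → X) (hT : MeasurePreserving T μ μ)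
    (hinf : μ Set.univ = ⊤)
    (hnontriv : ∃ A : Set X, MeasurableSet A ∧ μ A ≠ 0 ∧ μ Aᶜ ≠ 0)
    -- exactness
    (hexact : ∀ A : Set X,
      (∀ n : ℕ, MeasurableSet[MeasurableSpace.comap (T^[n]) m] A) →
      μ A = 0 ∨ μ Aᶜ = 0) :
    (∀ f : X → ℝ, Integrable f μ → Measurable f → (∃ C, ∀ x, |f x| ≤ C) →
      ∀ g : X → ℝ, Integrable g μ →
      Tendsto (fun n : ℕ => ∫ x, f (T^[n] x) * g x ∂μ) atTop (nhds 0)) ∧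
    (∀ A B : Set X, MeasurableSet A → MeasurableSet B → μ A < ⊤ → μ B < ⊤ →
      Tendsto (fun n : ℕ => μ (T^[n] ⁻¹' A ∩ B)) atTop (nhds 0)) := by
  have part1 : ∀ f : X → ℝ, Integrable f μ → Measurable f → (∃ C, ∀ x, |f x| ≤ C) →
      ∀ g : X → ℝ, Integrable g μ →
      Tendsto (fun n : ℕ => ∫ x, f (T^[n] x) * g x ∂μ) atTop (nhds 0) := by
    intro f hfi hfm hfb g hgi
    obtain ⟨C0, hC0⟩ := hfb
    set C := |C0| with hCdef
    have hC : ∀ x, |f x| ≤ C := fun x => (hC0 x).trans (le_abs_self C0)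
    have hCpos : 0 ≤ C := abs_nonneg C0
    have hfT : ∀ n : ℕ, Measurable fun x => f (T^[n] x) :=
      fun n => hfm.comp (hT.measurable.iterate n)
    have hf2 : MemLp f 2 μ := by
      refine (memLp_two_iff_integrable_sq hfi.aestronglyMeasurable).2 ?_
      refine (hfi.abs.const_mul C).mono' (hfm.pow_const 2).aestronglyMeasurable
        (ae_of_all _ fun x => ?_)
      have : ‖f x ^ 2‖ = |f x| * |f x| := by rw [Real.norm_eq_abs, abs_pow, sq]
      rw [this]
      exact mul_le_mul (hC x) le_rfl (abs_nonneg _) hCpos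
    -- replace g by a measurable representative
    set g' : X → ℝ := hgi.1.mk g with hg'def
    have hg'm : Measurable g' := hgi.1.stronglyMeasurable_mk.measurable
    have hgae : g =ᵐ[μ] g' := hgi.1.ae_eq_mk
    have hg'i : Integrable g' μ := hgi.congr hgae
    have hcong : ∀ n : ℕ, ∫ x, f (T^[n] x) * g x ∂μ = ∫ x, f (T^[n] x) * g' x ∂μ :=
      fun n => integral_congr_ae (hgae.mono fun x hx => by simp only [hx])
    have hmain : Tendsto (fun n : ℕ => ∫ x, f (T^[n] x) * g' x ∂μ) atTop (nhds 0) := by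
      rw [Metric.tendsto_atTop]
      intro ε hε
      obtain ⟨b, hbm, hb2, hbi, hbclose⟩ :=
        approx_lemma μ g' hg'i hg'm (ε / (2 * (C + 1))) (by positivity)
      have hcorr := corr_L2 μ hT hinf hexact f b hf2 hb2
      rw [Metric.tendsto_atTop] at hcorr
      obtain ⟨N, hN⟩ := hcorr (ε / 2) (by positivity)
      refine ⟨N, fun n hn => ?_⟩
      have hIb : Integrable (fun x => f (T^[n] x) * b x) μ :=
        hbi.bdd_mul (c := C) (hfT n).aestronglyMeasurable
          (ae_of_all _ fun x => by simpa [Real.norm_eq_abs] using hC (T^[n] x))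
      have hId : Integrable (fun x => f (T^[n] x) * (g' x - b x)) μ :=
        (hg'i.sub hbi).bdd_mul (c := C) (hfT n).aestronglyMeasurable
          (ae_of_all _ fun x => by simpa [Real.norm_eq_abs] using hC (T^[n] x))
      have hsplit : ∫ x, f (T^[n] x) * g' x ∂μ =
          (∫ x, f (T^[n] x) * b x ∂μ) + ∫ x, f (T^[n] x) * (g' x - b x) ∂μ := by
        rw [← integral_add hIb hId]
        refine integral_congr_ae (ae_of_all _ fun x => ?_)
        ring
      have hbnd : |∫ x, f (T^[n] x) * (g' x - b x) ∂μ| < ε / 2 := by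
        have h1 : |∫ x, f (T^[n] x) * (g' x - b x) ∂μ| ≤
            ∫ x, |f (T^[n] x) * (g' x - b x)| ∂μ := by
          simpa [Real.norm_eq_abs, abs_mul] using
            norm_integral_le_integral_norm (μ := μ) fun x => f (T^[n] x) * (g' x - b x)
        have h2 : ∫ x, |f (T^[n] x) * (g' x - b x)| ∂μ ≤ ∫ x, C * |g' x - b x| ∂μ := by
          refine integral_mono hId.abs ((hg'i.sub hbi).abs.const_mul C) fun x => ?_
          simp only [abs_mul]
          exact mul_le_mul (hC (T^[n] x)) le_rfl (abs_nonneg _) hCpos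
        have h3 : ∫ x, C * |g' x - b x| ∂μ = C * ∫ x, |g' x - b x| ∂μ := integral_const_mul C _
        have h4 : C * ∫ x, |g' x - b x| ∂μ ≤ C * (ε / (2 * (C + 1))) :=
          mul_le_mul_of_nonneg_left hbclose.le hCpos
        have h5 : C * (ε / (2 * (C + 1))) < ε / 2 := by
          have heq2 : C * (ε / (2 * (C + 1))) = (C * ε) / (2 * (C + 1)) := by ring
          rw [heq2, div_lt_div_iff₀ (by positivity) (by norm_num : (0:ℝ) < 2)]
          nlinarith
        calc |∫ x, f (T^[n] x) * (g' x - b x) ∂μ| ≤ ∫ x, |f (T^[n] x) * (g' x - b x)| ∂μ := h1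
          _ ≤ ∫ x, C * |g' x - b x| ∂μ := h2
          _ = C * ∫ x, |g' x - b x| ∂μ := h3
          _ ≤ C * (ε / (2 * (C + 1))) := h4
          _ < ε / 2 := h5
      have hNb := hN n hn
      rw [Real.dist_0_eq_abs] at *
      rw [hsplit]
      calc |(∫ x, f (T^[n] x) * b x ∂μ) + ∫ x, f (T^[n] x) * (g' x - b x) ∂μ| ≤
          |∫ x, f (T^[n] x) * b x ∂μ| + |∫ x, f (T^[n] x) * (g' x - b x) ∂μ| := abs_add_le _ _
        _ < ε / 2 + ε / 2 := add_lt_add hNb hbnd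
        _ = ε := by ring
    exact hmain.congr fun n => (hcong n).symm
  refine ⟨part1, ?_⟩
  intro A B hA hB hμA hμB
  set f : X → ℝ := A.indicator fun _ => (1:ℝ) with hfdef
  set g : X → ℝ := B.indicator fun _ => (1:ℝ) with hgdef
  have hfi : Integrable f μ :=
    (integrable_indicator_iff hA).2 (integrableOn_const hμA.ne)
  have hgi : Integrable g μ :=
    (integrable_indicator_iff hB).2 (integrableOn_const hμB.ne)
  have hfm : Measurable f := measurable_const.indicator hA
  have hfb : ∃ C, ∀ x, |f x| ≤ C := by
    refine ⟨1, fun x => ?_⟩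
    by_cases h : x ∈ A <;> simp [hfdef, Set.indicator_of_mem, Set.indicator_of_notMem, h]
  have htd := part1 f hfi hfm hfb g hgi
  have heq : ∀ n : ℕ, ∫ x, f (T^[n] x) * g x ∂μ = (μ (T^[n] ⁻¹' A ∩ B)).toReal := by
    intro n
    have hind : (fun x => f (T^[n] x) * g x) =
        (T^[n] ⁻¹' A ∩ B).indicator fun _ => (1:ℝ) := by
      funext x
      by_cases hxA : T^[n] x ∈ A <;> by_cases hxB : x ∈ B <;>
        simp [hfdef, hgdef, Set.indicator_apply, Set.mem_preimage, hxA, hxB,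
          Set.mem_inter_iff]
    rw [hind]
    have hms : MeasurableSet (T^[n] ⁻¹' A ∩ B) := ((hT.measurable.iterate n) hA).inter hB
    exact integral_indicator_one hms
  have htd' : Tendsto (fun n : ℕ => (μ (T^[n] ⁻¹' A ∩ B)).toReal) atTop (nhds 0) :=
    htd.congr heq
  have hne : ∀ n : ℕ, μ (T^[n] ⁻¹' A ∩ B) ≠ ⊤ :=
    fun n => (lt_of_le_of_lt (measure_mono Set.inter_subset_right) hμB).ne
  have hofreal : Tendsto (fun n : ℕ => ENNReal.ofReal ((μ (T^[n] ⁻¹' A ∩ B)).toReal))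
      atTop (nhds (ENNReal.ofReal 0)) := (ENNReal.continuous_ofReal.tendsto 0).comp htd'
  rw [ENNReal.ofReal_zero] at hofreal
  exact hofreal.congr fun n => ENNReal.ofReal_toReal (hne n)
end

section
/- Let (X, 𝒜, μ, T) be a σ-finite measure-preserving system with observable structure (𝒱, 𝒢, ℒ) such that Avg(F) exists for all F ∈ 𝒢 and 1 ∈ 𝒢. Suppose there exist nonnegative functions (ψ_j)_{j∈ℕ} on X and finite sets J_V ⊂ ℕ for each V ∈ 𝒱 such that: (i) for every G ∈ 𝒢 and j, G·ψ_j ∈ ℒ; (ii) ‖ Σ_{j∈J_V} ψ_j − 1_V ‖₁ = o(μ(V)) as μ(V) → ∞. If the system satisfies (GLM3) — i.e., for every F ∈ 𝒢, sup_{g ∈ ℒ, g≠0} ‖g‖₁⁻¹ |∫(F∘Tⁿ)g dμ − Avg(F)∫g dμ| → 0 as n → ∞ — then it satisfies (GGM2): for all F, G ∈ 𝒢, lim_{μ(V)→∞, n→∞} (1/μ(V))∫_V (F∘Tⁿ)G dμ = Avg(F)·Avg(G). -/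
open MeasureTheory Filter Topology

private lemma abs_integral_mul_le' {X : Type*} [MeasurableSpace X] {μ : Measure X}
    {h u : X → ℝ} (hh : AEStronglyMeasurable h μ) {C : ℝ}
    (hC : ∀ x, |h x| ≤ C) (hu : Integrable u μ) :
    |∫ x, h x * u x ∂μ| ≤ C * ∫ x, |u x| ∂μ := by
  have hint : Integrable (fun x => h x * u x) μ :=
    hu.bdd_mul hh (c := C) (ae_of_all _ fun x => by simpa [Real.norm_eq_abs] using hC x)
  have h1 : |∫ x, h x * u x ∂μ| ≤ ∫ x, |h x * u x| ∂μ := by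
    simpa [Real.norm_eq_abs, abs_mul] using
      norm_integral_le_integral_norm (μ := μ) (fun x => h x * u x)
  refine h1.trans ?_
  rw [← MeasureTheory.integral_const_mul]
  refine integral_mono hint.abs (hu.abs.const_mul C) fun x => ?_
  rw [abs_mul]
  exact mul_le_mul_of_nonneg_right (hC x) (abs_nonneg _)

set_option maxHeartbeats 1000000 in
/-- Proposition 2.4: Given a partition-of-unity structure `(ψ_j)`,
`(J_V)` adapted to `(𝒱, 𝒢, ℒ)`, (GLM3) implies (GGM2). -/
theorem GLM3_implies_GGM2
    {X : Type*} [MeasurableSpace X] (μ : Measure X) [SigmaFinite μ]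
    (T : X → X) (hT : MeasurePreserving T μ μ)
    (𝒱 : Set (Set X)) (h𝒱 : ∀ V ∈ 𝒱, MeasurableSet V ∧ μ V < ⊤)
    (𝒢 : Set (X → ℝ)) (ℒ : Set (X → ℝ))
    (h𝒢 : ∀ F ∈ 𝒢, Measurable F ∧ ∃ C, ∀ x, |F x| ≤ C)
    (h𝒢const : (fun _ : X => (1 : ℝ)) ∈ 𝒢)
    (hℒ : ∀ g ∈ ℒ, Integrable g μ)
    (Avg : (X → ℝ) → ℝ)
    (hAvg : ∀ F ∈ 𝒢, ∀ ε > 0, ∃ M : ℝ, ∀ V ∈ 𝒱, M ≤ (μ V).toReal →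
      |(∫ x in V, F x ∂μ) / (μ V).toReal - Avg F| ≤ ε)
    (ψ : ℕ → X → ℝ) (J : Set X → Finset ℕ)
    -- (i) nonnegativity
    (hψpos : ∀ j : ℕ, ∀ x, 0 ≤ ψ j x)
    -- (ii) G·ψ_j is a local observable
    (hGψ : ∀ G ∈ 𝒢, ∀ j : ℕ, (fun x => G x * ψ j x) ∈ ℒ)
    -- (iii) ‖Σ_{j∈J_V} ψ_j − 1_V‖₁ = o(μ(V)) as μ(V) → ∞
    (hpart : ∀ ε > 0, ∃ M : ℝ, ∀ V ∈ 𝒱, M ≤ (μ V).toReal →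
      (∫ x, |(∑ j ∈ J V, ψ j x) - V.indicator (fun _ => (1 : ℝ)) x| ∂μ)
        ≤ ε * (μ V).toReal)
    -- (GLM3)
    (hGLM3 : ∀ F ∈ 𝒢, ∀ ε > 0, ∃ N : ℕ, ∀ n ≥ N, ∀ g ∈ ℒ,
      |(∫ x, F (T^[n] x) * g x ∂μ) - Avg F * (∫ x, g x ∂μ)|
        ≤ ε * (∫ x, |g x| ∂μ)) :
    -- (GGM2)
    ∀ F ∈ 𝒢, ∀ G ∈ 𝒢,
      ∀ ε > 0, ∃ M : ℝ, ∀ V ∈ 𝒱, ∀ n : ℕ, M ≤ (μ V).toReal → M ≤ (n : ℝ) →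
        |(∫ x in V, F (T^[n] x) * G x ∂μ) / (μ V).toReal - Avg F * Avg G| ≤ ε := by
  intro F hF G hG ε hε
  obtain ⟨hFm, CF', hCF'⟩ := h𝒢 F hF
  obtain ⟨hGm, CG', hCG'⟩ := h𝒢 G hG
  set CF : ℝ := max CF' 0 with hCFdef
  set CG : ℝ := max CG' 0 with hCGdef
  have hCF : ∀ x, |F x| ≤ CF := fun x => (hCF' x).trans (le_max_left _ _)
  have hCG : ∀ x, |G x| ≤ CG := fun x => (hCG' x).trans (le_max_left _ _)
  have hCF0 : 0 ≤ CF := le_max_right _ _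
  have hCG0 : 0 ≤ CG := le_max_right _ _
  set BF : ℝ := CF + 1 with hBFdef
  have hBF0 : 0 < BF := by positivity
  set D : ℝ := (CF + BF) * CG + 1 with hDdef
  have hD0 : 0 < D := by positivity
  set δ : ℝ := min 1 (ε / 4 / D) with hδdef
  have hδ0 : 0 < δ := lt_min one_pos (by positivity)
  have hδ1 : δ ≤ 1 := min_le_left _ _
  have hδD : D * δ ≤ ε / 4 := by
    calc D * δ ≤ D * (ε / 4 / D) :=
          mul_le_mul_of_nonneg_left (min_le_right _ _) hD0.le
      _ = ε / 4 := by field_simp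
  set ε₁ : ℝ := ε / 4 / (2 * CG + 2) with hε₁def
  have hε₁0 : 0 < ε₁ := by positivity
  have hε₁eq : ε₁ * (2 * CG + 2) = ε / 4 := by
    rw [hε₁def]; field_simp
  set ε₂ : ℝ := ε / 4 / BF with hε₂def
  have hε₂0 : 0 < ε₂ := by positivity
  have hε₂eq : BF * ε₂ = ε / 4 := by
    rw [hε₂def]; field_simp
  obtain ⟨M1, hM1⟩ := hpart δ hδ0
  obtain ⟨N, hN⟩ := hGLM3 F hF ε₁ hε₁0
  obtain ⟨M2, hM2⟩ := hAvg G hG ε₂ hε₂0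
  obtain ⟨M3, hM3⟩ := hAvg F hF 1 one_pos
  clear_value CF CG BF D δ ε₁ ε₂
  refine ⟨max 1 (max (max M1 M2) (max M3 (N : ℝ))), ?_⟩
  intro V hVmem n hVM hnM
  obtain ⟨hVmeas, hVlt⟩ := h𝒱 V hVmem
  set m : ℝ := (μ V).toReal with hmdef
  have hm1 : 1 ≤ m := le_trans (le_max_left _ _) hVM
  have hm0 : 0 < m := lt_of_lt_of_le one_pos hm1
  have hVM1 : M1 ≤ m := le_trans (le_trans (le_max_left _ _) (le_max_left _ _))
    (le_trans (le_max_right _ _) hVM)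
  have hVM2 : M2 ≤ m := le_trans (le_trans (le_max_right _ _) (le_max_left _ _))
    (le_trans (le_max_right _ _) hVM)
  have hVM3 : M3 ≤ m := le_trans (le_trans (le_max_left _ _) (le_max_right _ _))
    (le_trans (le_max_right _ _) hVM)
  have hnN : N ≤ n := by
    have h : (N : ℝ) ≤ (n : ℝ) :=
      le_trans (le_trans (le_trans (le_max_right _ _) (le_max_right _ _))
        (le_max_right _ _)) hnM
    exact_mod_cast h
  -- measurability / integrability facts
  have hTn : Measurable (T^[n]) := (hT.iterate n).measurable
  have hFnm : AEStronglyMeasurable (fun x => F (T^[n] x)) μ :=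
    (hFm.comp hTn).aestronglyMeasurable
  have hFnb : ∀ x, |F (T^[n] x)| ≤ CF := fun x => hCF _
  have hψint : ∀ j : ℕ, Integrable (ψ j) μ := by
    intro j
    have h := hℒ _ (hGψ _ h𝒢const j)
    simpa [one_mul] using h
  have hGψint : ∀ j : ℕ, Integrable (fun x => G x * ψ j x) μ :=
    fun j => hℒ _ (hGψ G hG j)
  have hs_int : Integrable (fun x => ∑ j ∈ J V, ψ j x) μ :=
    integrable_finset_sum _ fun j _ => hψint j
  have hind_int : Integrable (V.indicator fun _ => (1 : ℝ)) μ := by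
    rw [integrable_indicator_iff hVmeas]
    exact integrableOn_const hVlt.ne
  have hpartV : (∫ x, |(∑ j ∈ J V, ψ j x) - V.indicator (fun _ => (1 : ℝ)) x| ∂μ)
      ≤ δ * m := hM1 V hVmem hVM1
  have hpartV' : (∫ x, |V.indicator (fun _ => (1 : ℝ)) x - (∑ j ∈ J V, ψ j x)| ∂μ)
      ≤ δ * m := by
    simpa [abs_sub_comm] using hpartV
  have hFnGm : AEStronglyMeasurable (fun x => F (T^[n] x) * G x) μ :=
    hFnm.mul hGm.aestronglyMeasurable
  have hFnGb : ∀ x, |F (T^[n] x) * G x| ≤ CF * CG := fun x => by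
    rw [abs_mul]
    exact mul_le_mul (hFnb x) (hCG x) (abs_nonneg _) hCF0
  have hGs_int : Integrable (fun x => G x * ∑ j ∈ J V, ψ j x) μ := by
    have e : (fun x => G x * ∑ j ∈ J V, ψ j x)
        = fun x => ∑ j ∈ J V, G x * ψ j x := funext fun x => Finset.mul_sum _ _ _
    rw [e]
    exact integrable_finset_sum _ fun j _ => hGψint j
  have hFnGs_int : Integrable (fun x => F (T^[n] x) * (G x * ∑ j ∈ J V, ψ j x)) μ :=
    hGs_int.bdd_mul hFnm (c := CF) (ae_of_all _ fun x => by rw [Real.norm_eq_abs]; exact hFnb x)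
  have hFnGind_int :
      Integrable (fun x => (F (T^[n] x) * G x) * V.indicator (fun _ => (1 : ℝ)) x) μ :=
    hind_int.bdd_mul hFnGm (c := CF * CG) (ae_of_all _ fun x => by rw [Real.norm_eq_abs]; exact hFnGb x)
  have hGind_int : Integrable (fun x => G x * V.indicator (fun _ => (1 : ℝ)) x) μ :=
    hind_int.bdd_mul hGm.aestronglyMeasurable
      (c := CG) (ae_of_all _ fun x => by rw [Real.norm_eq_abs]; exact hCG x)
  have hFnGψ_int : ∀ j : ℕ, Integrable (fun x => F (T^[n] x) * (G x * ψ j x)) μ :=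
    fun j => (hGψint j).bdd_mul hFnm (c := CF) (ae_of_all _ fun x => by rw [Real.norm_eq_abs]; exact hFnb x)
  -- indicator rewriting of set integrals
  have eSetF : (∫ x in V, F (T^[n] x) * G x ∂μ)
      = ∫ x, (F (T^[n] x) * G x) * V.indicator (fun _ => (1 : ℝ)) x ∂μ := by
    rw [← integral_indicator hVmeas]
    congr 1
    funext x
    by_cases hx : x ∈ V <;> simp [hx]
  have eSetG : (∫ x in V, G x ∂μ)
      = ∫ x, G x * V.indicator (fun _ => (1 : ℝ)) x ∂μ := by
    rw [← integral_indicator hVmeas]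
    congr 1
    funext x
    by_cases hx : x ∈ V <;> simp [hx]
  have hindInt : (∫ x, V.indicator (fun _ => (1 : ℝ)) x ∂μ) = m := by
    rw [integral_indicator hVmeas]
    simp [hmdef, Measure.real]
  -- bound on |Avg F|
  have hAvgFb : |Avg F| ≤ BF := by
    have h3 := hM3 V hVmem hVM3
    have h4 : |∫ x in V, F x ∂μ| ≤ CF * m := by
      have h4' : ‖∫ x in V, F x ∂μ‖ ≤ CF * (μ V).toReal :=
        norm_setIntegral_le_of_norm_le_const_ae (μ := μ) (s := V) (f := F) hVlt
          (ae_of_all _ fun x => by rw [Real.norm_eq_abs]; exact hCF x)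
      rw [Real.norm_eq_abs] at h4'
      exact h4'
    have h5 : |(∫ x in V, F x ∂μ) / m| ≤ CF := by
      rw [abs_div, abs_of_pos hm0, div_le_iff₀ hm0]
      exact h4
    calc |Avg F| = |(∫ x in V, F x ∂μ) / m - ((∫ x in V, F x ∂μ) / m - Avg F)| := by
          ring_nf
      _ ≤ |(∫ x in V, F x ∂μ) / m| + |(∫ x in V, F x ∂μ) / m - Avg F| := abs_sub _ _
      _ ≤ CF + 1 := add_le_add h5 h3
      _ = BF := hBFdef.symm
  -- ∫ s ≤ (1 + δ) * m
  have hsInt_le : (∫ x, (∑ j ∈ J V, ψ j x) ∂μ) ≤ (1 + δ) * m := by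
    have hsub : (∫ x, ((∑ j ∈ J V, ψ j x) - V.indicator (fun _ => (1 : ℝ)) x) ∂μ)
        = (∫ x, (∑ j ∈ J V, ψ j x) ∂μ)
          - ∫ x, V.indicator (fun _ => (1 : ℝ)) x ∂μ :=
      integral_sub hs_int hind_int
    rw [hindInt] at hsub
    have h1 : (∫ x, ((∑ j ∈ J V, ψ j x) - V.indicator (fun _ => (1 : ℝ)) x) ∂μ)
        ≤ δ * m := by
      refine le_trans (le_abs_self _) (le_trans ?_ hpartV)
      simpa [Real.norm_eq_abs] using
        norm_integral_le_integral_norm (μ := μ)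
          (fun x => (∑ j ∈ J V, ψ j x) - V.indicator (fun _ => (1 : ℝ)) x)
    linarith
  -- (B1)
  have hB1 : |(∫ x in V, F (T^[n] x) * G x ∂μ)
      - ∫ x, F (T^[n] x) * (G x * ∑ j ∈ J V, ψ j x) ∂μ| ≤ CF * CG * (δ * m) := by
    rw [eSetF]
    have e3 : (∫ x, (F (T^[n] x) * G x) * V.indicator (fun _ => (1 : ℝ)) x ∂μ)
        - (∫ x, F (T^[n] x) * (G x * ∑ j ∈ J V, ψ j x) ∂μ)
        = ∫ x, (F (T^[n] x) * G x)
            * (V.indicator (fun _ => (1 : ℝ)) x - ∑ j ∈ J V, ψ j x) ∂μ := by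
      rw [← integral_sub hFnGind_int hFnGs_int]
      congr 1
      funext x
      ring
    rw [e3]
    refine le_trans (abs_integral_mul_le' hFnGm hFnGb (hind_int.sub hs_int)) ?_
    exact mul_le_mul_of_nonneg_left hpartV' (mul_nonneg hCF0 hCG0)
  -- sums
  have hsum1 : (∫ x, F (T^[n] x) * (G x * ∑ j ∈ J V, ψ j x) ∂μ)
      = ∑ j ∈ J V, ∫ x, F (T^[n] x) * (G x * ψ j x) ∂μ := by
    rw [← integral_finset_sum _ fun j _ => hFnGψ_int j]
    congr 1
    funext x
    rw [Finset.mul_sum, Finset.mul_sum]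
  have hsum2 : (∫ x, G x * ∑ j ∈ J V, ψ j x ∂μ)
      = ∑ j ∈ J V, ∫ x, G x * ψ j x ∂μ := by
    rw [← integral_finset_sum _ fun j _ => hGψint j]
    congr 1
    funext x
    rw [Finset.mul_sum]
  have hGabsψ_int : ∀ j : ℕ, Integrable (fun x => |G x| * ψ j x) μ := by
    intro j
    refine (hGψint j).abs.congr (Filter.Eventually.of_forall fun x => ?_)
    show |G x * ψ j x| = |G x| * ψ j x
    rw [abs_mul, abs_of_nonneg (hψpos j x)]
  have habsGs : (∑ j ∈ J V, ∫ x, |G x * ψ j x| ∂μ) ≤ CG * ((1 + δ) * m) := by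
    have e1 : (∑ j ∈ J V, ∫ x, |G x * ψ j x| ∂μ)
        = ∫ x, (∑ j ∈ J V, |G x| * ψ j x) ∂μ := by
      rw [integral_finset_sum _ fun j _ => hGabsψ_int j]
      refine Finset.sum_congr rfl fun j _ =>
        integral_congr_ae (Filter.Eventually.of_forall fun x => ?_)
      show |G x * ψ j x| = |G x| * ψ j x
      rw [abs_mul, abs_of_nonneg (hψpos j x)]
    rw [e1]
    have h1 : (∫ x, (∑ j ∈ J V, |G x| * ψ j x) ∂μ)
        ≤ ∫ x, CG * (∑ j ∈ J V, ψ j x) ∂μ := by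
      refine integral_mono (integrable_finset_sum _ fun j _ => hGabsψ_int j)
        (hs_int.const_mul CG) fun x => ?_
      rw [Finset.mul_sum]
      exact Finset.sum_le_sum fun j _ =>
        mul_le_mul_of_nonneg_right (hCG x) (hψpos j x)
    refine h1.trans ?_
    rw [MeasureTheory.integral_const_mul]
    exact mul_le_mul_of_nonneg_left hsInt_le hCG0
  -- (B2)
  have hB2 : |(∫ x, F (T^[n] x) * (G x * ∑ j ∈ J V, ψ j x) ∂μ)
      - Avg F * ∫ x, G x * ∑ j ∈ J V, ψ j x ∂μ| ≤ ε₁ * (CG * ((1 + δ) * m)) := by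
    rw [hsum1, hsum2, Finset.mul_sum, ← Finset.sum_sub_distrib]
    calc |∑ j ∈ J V, ((∫ x, F (T^[n] x) * (G x * ψ j x) ∂μ)
            - Avg F * ∫ x, G x * ψ j x ∂μ)|
        ≤ ∑ j ∈ J V, |(∫ x, F (T^[n] x) * (G x * ψ j x) ∂μ)
            - Avg F * ∫ x, G x * ψ j x ∂μ| := Finset.abs_sum_le_sum_abs _ _
      _ ≤ ∑ j ∈ J V, ε₁ * ∫ x, |G x * ψ j x| ∂μ :=
          Finset.sum_le_sum fun j _ => hN n hnN _ (hGψ G hG j)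
      _ = ε₁ * ∑ j ∈ J V, ∫ x, |G x * ψ j x| ∂μ := (Finset.mul_sum _ _ _).symm
      _ ≤ ε₁ * (CG * ((1 + δ) * m)) := mul_le_mul_of_nonneg_left habsGs hε₁0.le
  -- (B3)
  have hGsdiff : |(∫ x, G x * ∑ j ∈ J V, ψ j x ∂μ) - ∫ x in V, G x ∂μ|
      ≤ CG * (δ * m) := by
    rw [eSetG]
    have e : (∫ x, G x * ∑ j ∈ J V, ψ j x ∂μ)
        - (∫ x, G x * V.indicator (fun _ => (1 : ℝ)) x ∂μ)
        = ∫ x, G x * ((∑ j ∈ J V, ψ j x) - V.indicator (fun _ => (1 : ℝ)) x) ∂μ := by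
      rw [← integral_sub hGs_int hGind_int]
      congr 1
      funext x
      ring
    rw [e]
    refine le_trans (abs_integral_mul_le' hGm.aestronglyMeasurable hCG
      (hs_int.sub hind_int)) ?_
    exact mul_le_mul_of_nonneg_left hpartV hCG0
  have hB3 : |Avg F * (∫ x, G x * ∑ j ∈ J V, ψ j x ∂μ) - Avg F * ∫ x in V, G x ∂μ|
      ≤ BF * (CG * (δ * m)) := by
    rw [← mul_sub, abs_mul]
    exact mul_le_mul hAvgFb hGsdiff (abs_nonneg _) hBF0.le
  -- (B4)
  have hG2 := hM2 V hVmem hVM2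
  have hB4 : |Avg F * (∫ x in V, G x ∂μ) - Avg F * Avg G * m| ≤ BF * (ε₂ * m) := by
    have e : Avg F * (∫ x in V, G x ∂μ) - Avg F * Avg G * m
        = Avg F * (((∫ x in V, G x ∂μ) / m - Avg G) * m) := by
      field_simp
    rw [e, abs_mul, abs_mul, abs_of_pos hm0]
    exact mul_le_mul hAvgFb (mul_le_mul_of_nonneg_right hG2 hm0.le)
      (by positivity) hBF0.le
  -- combine
  have key : |(∫ x in V, F (T^[n] x) * G x ∂μ) - Avg F * Avg G * m|
      ≤ CF * CG * (δ * m) + ε₁ * (CG * ((1 + δ) * m)) + BF * (CG * (δ * m))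
        + BF * (ε₂ * m) := by
    have t1 := abs_sub_le (∫ x in V, F (T^[n] x) * G x ∂μ)
      (∫ x, F (T^[n] x) * (G x * ∑ j ∈ J V, ψ j x) ∂μ) (Avg F * Avg G * m)
    have t2 := abs_sub_le (∫ x, F (T^[n] x) * (G x * ∑ j ∈ J V, ψ j x) ∂μ)
      (Avg F * ∫ x, G x * ∑ j ∈ J V, ψ j x ∂μ) (Avg F * Avg G * m)
    have t3 := abs_sub_le (Avg F * ∫ x, G x * ∑ j ∈ J V, ψ j x ∂μ)
      (Avg F * ∫ x in V, G x ∂μ) (Avg F * Avg G * m)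
    linarith
  have ecoef : CF * CG * δ + ε₁ * (CG * (1 + δ)) + BF * (CG * δ) + BF * ε₂ ≤ ε := by
    have h5 : (CF + BF) * CG ≤ D := by rw [hDdef]; linarith
    have h6 : CF * CG * δ + BF * (CG * δ) ≤ ε / 4 := by
      have e : CF * CG * δ + BF * (CG * δ) = ((CF + BF) * CG) * δ := by ring
      rw [e]
      exact le_trans (mul_le_mul_of_nonneg_right h5 hδ0.le) hδD
    have h7 : ε₁ * (CG * (1 + δ)) ≤ ε / 4 := by
      rw [← hε₁eq]
      refine mul_le_mul_of_nonneg_left ?_ hε₁0.le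
      have h8 : (1 : ℝ) + δ ≤ 2 := by linarith
      have h9 := mul_le_mul_of_nonneg_left h8 hCG0
      linarith
    linarith
  have efin : (∫ x in V, F (T^[n] x) * G x ∂μ) / m - Avg F * Avg G
      = ((∫ x in V, F (T^[n] x) * G x ∂μ) - Avg F * Avg G * m) / m := by
    rw [sub_div, mul_div_assoc, div_self (ne_of_gt hm0), mul_one]
  rw [efin, abs_div, abs_of_pos hm0, div_le_iff₀ hm0]
  refine key.trans ?_
  calc CF * CG * (δ * m) + ε₁ * (CG * ((1 + δ) * m)) + BF * (CG * (δ * m))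
        + BF * (ε₂ * m)
      = (CF * CG * δ + ε₁ * (CG * (1 + δ)) + BF * (CG * δ) + BF * ε₂) * m := by ring
    _ ≤ ε * m := mul_le_mul_of_nonneg_right ecoef hm0.le
end

section
/- The Boole transformation T : ℝ \ {0} → ℝ, T(x) = x − 1/x, preserves Lebesgue measure on ℝ: for every Borel set A, m(T⁻¹A) = m(A). -/
open MeasureTheory Filter Topology

private lemma sqrt_facts (y : ℝ) : 0 < Real.sqrt (y^2+4) ∧ (Real.sqrt (y^2+4))^2 = y^2+4 :=
  ⟨Real.sqrt_pos.2 (by positivity), Real.sq_sqrt (by positivity)⟩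

private lemma gp_pos (y : ℝ) : 0 < (y + Real.sqrt (y^2+4))/2 := by
  obtain ⟨h1, h2⟩ := sqrt_facts y
  nlinarith

private lemma gm_neg (y : ℝ) : (y - Real.sqrt (y^2+4))/2 < 0 := by
  obtain ⟨h1, h2⟩ := sqrt_facts y
  nlinarith

private lemma T_gp (y : ℝ) :
    ((y + Real.sqrt (y^2+4))/2) - ((y + Real.sqrt (y^2+4))/2)⁻¹ = y := by
  obtain ⟨h1, h2⟩ := sqrt_facts y
  have hinv : ((y + Real.sqrt (y^2+4))/2)⁻¹ = (Real.sqrt (y^2+4) - y)/2 := by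
    rw [inv_eq_of_mul_eq_one_right]
    nlinarith
  rw [hinv]; ring

private lemma T_gm (y : ℝ) :
    ((y - Real.sqrt (y^2+4))/2) - ((y - Real.sqrt (y^2+4))/2)⁻¹ = y := by
  obtain ⟨h1, h2⟩ := sqrt_facts y
  have hinv : ((y - Real.sqrt (y^2+4))/2)⁻¹ = (-Real.sqrt (y^2+4) - y)/2 := by
    rw [inv_eq_of_mul_eq_one_right]
    nlinarith
  rw [hinv]; ring

private lemma gp_T {x : ℝ} (hx : 0 < x) :
    ((x - x⁻¹) + Real.sqrt ((x - x⁻¹)^2+4))/2 = x := by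
  have hx0 : x ≠ 0 := ne_of_gt hx
  have h : (x - x⁻¹)^2 + 4 = (x + x⁻¹)^2 := by field_simp; ring
  rw [h, Real.sqrt_sq (by positivity)]
  ring

private lemma gm_T {x : ℝ} (hx : x < 0) :
    ((x - x⁻¹) - Real.sqrt ((x - x⁻¹)^2+4))/2 = x := by
  have hx0 : x ≠ 0 := ne_of_lt hx
  have h : (x - x⁻¹)^2 + 4 = (-(x + x⁻¹))^2 := by field_simp; ring
  have hinv : x⁻¹ < 0 := inv_neg''.2 hx
  rw [h, Real.sqrt_sq (by linarith)]
  ring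

private lemma sqrt_hasDerivAt (y : ℝ) :
    HasDerivAt (fun y : ℝ => Real.sqrt (y^2+4)) (y / Real.sqrt (y^2+4)) y := by
  have h1 : HasDerivAt (fun y : ℝ => y^2+4) (2*y) y := by
    simpa using ((hasDerivAt_pow 2 y).add_const 4)
  have h2 := (Real.hasDerivAt_sqrt (by positivity : y^2+4 ≠ 0)).comp y h1
  refine h2.congr_deriv ?_
  have : Real.sqrt (y^2+4) > 0 := Real.sqrt_pos.2 (by positivity)
  field_simp

private lemma gp_hasDerivAt (y : ℝ) :
    HasDerivAt (fun y : ℝ => (y + Real.sqrt (y^2+4))/2)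
      ((Real.sqrt (y^2+4) + y) / (2 * Real.sqrt (y^2+4))) y := by
  obtain ⟨h1, _⟩ := sqrt_facts y
  have h := ((hasDerivAt_id y).add (sqrt_hasDerivAt y)).div_const 2
  refine h.congr_deriv ?_
  field_simp

private lemma gm_hasDerivAt (y : ℝ) :
    HasDerivAt (fun y : ℝ => (y - Real.sqrt (y^2+4))/2)
      ((Real.sqrt (y^2+4) - y) / (2 * Real.sqrt (y^2+4))) y := by
  obtain ⟨h1, _⟩ := sqrt_facts y
  have h := ((hasDerivAt_id y).sub (sqrt_hasDerivAt y)).div_const 2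
  refine h.congr_deriv ?_
  field_simp

private lemma Dp_nonneg (y : ℝ) :
    0 ≤ (Real.sqrt (y^2+4) + y) / (2 * Real.sqrt (y^2+4)) := by
  obtain ⟨h1, _⟩ := sqrt_facts y
  have h3 := gp_pos y
  apply div_nonneg <;> nlinarith

private lemma Dm_nonneg (y : ℝ) :
    0 ≤ (Real.sqrt (y^2+4) - y) / (2 * Real.sqrt (y^2+4)) := by
  obtain ⟨h1, _⟩ := sqrt_facts y
  have h3 := gm_neg y
  apply div_nonneg <;> nlinarith

private lemma continuous_sqrt4 : Continuous (fun y : ℝ => Real.sqrt (y^2+4)) :=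
  Real.continuous_sqrt.comp (by continuity)

private lemma volume_image_eq_lintegral {s : Set ℝ} (hs : MeasurableSet s) {f f' : ℝ → ℝ}
    (hf' : ∀ x ∈ s, HasDerivWithinAt f (f' x) s x) (hf : Set.InjOn f s) :
    volume (f '' s) = ∫⁻ x in s, ENNReal.ofReal |f' x| := by
  rw [← setLIntegral_one, lintegral_image_eq_lintegral_abs_det_fderiv_mul volume hs
    (fun x hx => (hf' x hx).hasFDerivWithinAt) hf]
  simp [ContinuousLinearMap.det_toSpanSingleton]

/-- The Boole transformation `T(x) = x − 1/x` preserves Lebesgue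
measure on `ℝ`: for every Borel set `A`, `m(T⁻¹A) = m(A)`. -/
theorem boole_preserves_lebesgue :
    ∀ A : Set ℝ, MeasurableSet A →
      volume ((fun x : ℝ => x - x⁻¹) ⁻¹' A) = volume A := by
  intro A hA
  set T : ℝ → ℝ := fun x => x - x⁻¹ with hT
  set gp : ℝ → ℝ := fun y => (y + Real.sqrt (y^2+4))/2 with hgp
  set gm : ℝ → ℝ := fun y => (y - Real.sqrt (y^2+4))/2 with hgm
  set P : Set ℝ := T ⁻¹' A with hP
  have hTmeas : Measurable T := measurable_id.sub measurable_inv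
  have hPmeas : MeasurableSet P := hTmeas hA
  -- inverse branch identities
  have hTgp : ∀ y, T (gp y) = y := fun y => T_gp y
  have hTgm : ∀ y, T (gm y) = y := fun y => T_gm y
  have hgp_inj : Set.InjOn gp A := fun a _ b _ h => by
    have := congrArg T h; rwa [hTgp, hTgp] at this
  have hgm_inj : Set.InjOn gm A := fun a _ b _ h => by
    have := congrArg T h; rwa [hTgm, hTgm] at this
  -- image equalities
  have hEp : gp '' A = P ∩ Set.Ioi 0 := by
    ext x
    constructor
    · rintro ⟨y, hy, rfl⟩
      exact ⟨by simpa [hP, Set.mem_preimage, hTgp y] using hy, gp_pos y⟩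
    · rintro ⟨hxP, hx⟩
      exact ⟨T x, hxP, gp_T hx⟩
  have hEm : gm '' A = P ∩ Set.Iio 0 := by
    ext x
    constructor
    · rintro ⟨y, hy, rfl⟩
      exact ⟨by simpa [hP, Set.mem_preimage, hTgm y] using hy, gm_neg y⟩
    · rintro ⟨hxP, hx⟩
      exact ⟨T x, hxP, gm_T hx⟩
  -- change of variables
  have hvp : volume (P ∩ Set.Ioi 0) =
      ∫⁻ y in A, ENNReal.ofReal ((Real.sqrt (y^2+4) + y) / (2 * Real.sqrt (y^2+4))) := by
    rw [← hEp, volume_image_eq_lintegral hA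
      (fun y _ => (gp_hasDerivAt y).hasDerivWithinAt) hgp_inj]
    congr 1
    ext y
    rw [abs_of_nonneg (Dp_nonneg y)]
  have hvm : volume (P ∩ Set.Iio 0) =
      ∫⁻ y in A, ENNReal.ofReal ((Real.sqrt (y^2+4) - y) / (2 * Real.sqrt (y^2+4))) := by
    rw [← hEm, volume_image_eq_lintegral hA
      (fun y _ => (gm_hasDerivAt y).hasDerivWithinAt) hgm_inj]
    congr 1
    ext y
    rw [abs_of_nonneg (Dm_nonneg y)]
  -- split the preimage
  have hsplit : P \ {0} = (P ∩ Set.Ioi 0) ∪ (P ∩ Set.Iio 0) := by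
    ext x
    simp only [Set.mem_diff, Set.mem_singleton_iff, Set.mem_union, Set.mem_inter_iff,
      Set.mem_Ioi, Set.mem_Iio]
    constructor
    · rintro ⟨h1, h2⟩
      rcases Ne.lt_or_gt h2 with h | h
      · exact Or.inr ⟨h1, h⟩
      · exact Or.inl ⟨h1, h⟩
    · rintro (⟨h1, h2⟩ | ⟨h1, h2⟩) <;> exact ⟨h1, by intro h; subst h; simp at h2⟩
  have hvolP : volume P = volume (P ∩ Set.Ioi 0) + volume (P ∩ Set.Iio 0) := by
    rw [← measure_diff_null (measure_singleton (0 : ℝ)), hsplit,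
      measure_union _ (hPmeas.inter measurableSet_Iio)]
    exact Set.disjoint_left.2 fun x hx hx' => absurd (lt_trans hx'.2 hx.2) (lt_irrefl x)
  -- sum of densities equals 1
  have hcont : Measurable fun y : ℝ =>
      ENNReal.ofReal ((Real.sqrt (y^2+4) + y) / (2 * Real.sqrt (y^2+4))) := by
    apply ENNReal.measurable_ofReal.comp
    apply Measurable.div
    · exact (continuous_sqrt4.add continuous_id).measurable
    · exact (continuous_const.mul continuous_sqrt4).measurable
  rw [hvolP, hvp, hvm, ← lintegral_add_left hcont]
  have hone : ∀ y : ℝ,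
      ENNReal.ofReal ((Real.sqrt (y^2+4) + y) / (2 * Real.sqrt (y^2+4))) +
        ENNReal.ofReal ((Real.sqrt (y^2+4) - y) / (2 * Real.sqrt (y^2+4))) = 1 := by
    intro y
    obtain ⟨h1, _⟩ := sqrt_facts y
    rw [← ENNReal.ofReal_add (Dp_nonneg y) (Dm_nonneg y)]
    have : (Real.sqrt (y^2+4) + y) / (2 * Real.sqrt (y^2+4)) +
        (Real.sqrt (y^2+4) - y) / (2 * Real.sqrt (y^2+4)) = 1 := by
      field_simp
      ring
    rw [this, ENNReal.ofReal_one]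
  simp only [hone]
  rw [setLIntegral_one]
end

section
/- Let T : ℝ → ℝ be a translation-invariant map (T(x+1) = T(x)+1) preserving Lebesgue measure m on ℝ, and let T_I : [0,1) → [0,1) be the quotient map T_I(x) = T(x) mod 1, which preserves Lebesgue measure m_I on [0,1). Suppose (I, T_I, m_I) is mixing and T is exact on ℝ (so mean-zero L¹ differences decorrelate: ∫(F∘Tⁿ)h dm → 0 whenever ∫h dm = 0). Then for every bounded ℤ-periodic F : ℝ → ℝ and every g ∈ L¹(ℝ), lim_{n→∞} ∫_ℝ (F∘Tⁿ)·g dm = (∫₀¹ F dm)·(∫_ℝ g dm). -/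
open MeasureTheory Filter Topology

/-- Let `T : ℝ → ℝ` preserve Lebesgue measure, commute with integer
translation (`T(x+1) = T(x)+1`), with mixing quotient map `T_I x = fract (T x)` on
`[0,1)`, and satisfying the mean-zero decorrelation coming from exactness.  Then every
bounded `ℤ`-periodic `F` is an equilibrium observable with `ρ(F) = ∫₀¹ F`. -/
theorem periodic_observable_equilibrium
    (T : ℝ → ℝ) (hT : MeasurePreserving T volume volume)
    (htrans : ∀ x : ℝ, T (x + 1) = T x + 1)
    -- mixing of the quotient system (I, T_I, m_I), T_I x = fract (T x)
    (hmix : ∀ F : ℝ → ℝ, Measurable F → (∃ C, ∀ x, |F x| ≤ C) →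
      ∀ g : ℝ → ℝ, Integrable g volume → (∀ x ∉ Set.Ico (0 : ℝ) 1, g x = 0) →
      Tendsto
        (fun n : ℕ => ∫ x in Set.Ico (0 : ℝ) 1, F ((fun y => Int.fract (T y))^[n] x) * g x)
        atTop (nhds ((∫ x in Set.Ico (0 : ℝ) 1, F x) * ∫ x : ℝ, g x)))
    -- decorrelation of mean-zero L¹ observables (consequence of exactness of T)
    (hGLM1 : ∀ F : ℝ → ℝ, Measurable F → (∃ C, ∀ x, |F x| ≤ C) →
      ∀ h : ℝ → ℝ, Integrable h volume → (∫ x : ℝ, h x) = 0 →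
      Tendsto (fun n : ℕ => ∫ x : ℝ, F (T^[n] x) * h x) atTop (nhds 0)) :
    ∀ F : ℝ → ℝ, Measurable F → (∃ C, ∀ x, |F x| ≤ C) →
    (∀ x : ℝ, F (x + 1) = F x) →
    ∀ g : ℝ → ℝ, Integrable g volume →
    Tendsto (fun n : ℕ => ∫ x : ℝ, F (T^[n] x) * g x) atTop
      (nhds ((∫ x in Set.Ico (0 : ℝ) 1, F x) * ∫ x : ℝ, g x)) := by
  intro F hF hbd hper g hg
  obtain ⟨C, hC⟩ := hbd
  have hTm : Measurable T := hT.measurable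
  -- T commutes with integer translations
  have htransZ : ∀ (x : ℝ) (k : ℤ), T (x + k) = T x + k := by
    have hdown : ∀ x : ℝ, T (x - 1) = T x - 1 := by
      intro x
      have := htrans (x - 1)
      simp only [sub_add_cancel] at this
      linarith
    intro x k
    induction k using Int.induction_on with
    | zero => simp
    | succ n ih =>
        have h2 := htrans (x + (n : ℤ))
        push_cast at ih h2 ⊢
        rw [show x + ((n:ℝ) + 1) = x + (n:ℝ) + 1 by ring, h2, ih]; ring
    | pred n ih =>
        have h2 := hdown (x + -((n : ℤ):ℝ))
        push_cast at ih h2 ⊢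
        rw [show x + (-(n:ℝ) - 1) = x + -(n:ℝ) - 1 by ring, h2, ih]; ring
  -- F is periodic with all integer periods
  have hperZ : ∀ (x : ℝ) (k : ℤ), F (x - k) = F x := by
    intro x k
    have hp : Function.Periodic F 1 := hper
    simpa using hp.sub_int_mul_eq (x := x) k
  have hFfract : ∀ y : ℝ, F (Int.fract y) = F y := by
    intro y
    rw [Int.fract]
    exact hperZ y ⌊y⌋
  -- iterates of T_I agree with fract of iterates of T on [0,1)
  have hiter : ∀ n : ℕ, ∀ x ∈ Set.Ico (0:ℝ) 1,
      (fun y => Int.fract (T y))^[n] x = Int.fract (T^[n] x) := by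
    intro n
    induction n with
    | zero => intro x hx; simpa using (Int.fract_eq_self.2 ⟨hx.1, hx.2⟩).symm
    | succ n ih =>
        intro x hx
        rw [Function.iterate_succ_apply', Function.iterate_succ_apply', ih x hx]
        set y := T^[n] x with hy
        have hTy : T y = T (Int.fract y) + ⌊y⌋ := by
          have := htransZ (Int.fract y) ⌊y⌋
          rw [Int.fract_add_floor] at this
          linarith
        have : T (Int.fract y) = T y - ⌊y⌋ := by linarith
        rw [this, Int.fract_sub_intCast]
  -- decomposition
  set c := ∫ x : ℝ, g x with hc
  set g₀ : ℝ → ℝ := Set.indicator (Set.Ico (0:ℝ) 1) (fun _ => c) with hg₀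
  have hg₀i : Integrable g₀ volume := by
    have hio : IntegrableOn (fun _ : ℝ => c) (Set.Ico (0:ℝ) 1) volume :=
      integrableOn_const (by simp [Real.volume_Ico])
    exact hio.integrable_indicator measurableSet_Ico
  have hg₀int : (∫ x : ℝ, g₀ x) = c := by
    rw [hg₀, integral_indicator measurableSet_Ico]
    simp [Real.volume_Ico]
  set h : ℝ → ℝ := fun x => g x - g₀ x with hh
  have hhi : Integrable h volume := hg.sub hg₀i
  have hhint : (∫ x : ℝ, h x) = 0 := by
    rw [hh]
    rw [integral_sub hg hg₀i, hg₀int]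
    simp [hc]
  have hFTn : ∀ n : ℕ, Measurable (fun x => F (T^[n] x)) := fun n =>
    hF.comp (hTm.iterate n)
  have hint1 : ∀ n : ℕ, Integrable (fun x => F (T^[n] x) * g₀ x) volume := fun n =>
    hg₀i.bdd_mul (c := C) (hFTn n).aestronglyMeasurable (ae_of_all _ fun x => by
      simpa [Real.norm_eq_abs] using hC (T^[n] x))
  have hint2 : ∀ n : ℕ, Integrable (fun x => F (T^[n] x) * h x) volume := fun n =>
    hhi.bdd_mul (c := C) (hFTn n).aestronglyMeasurable (ae_of_all _ fun x => by
      simpa [Real.norm_eq_abs] using hC (T^[n] x))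
  -- split the integral
  have hsplit : ∀ n : ℕ, (∫ x : ℝ, F (T^[n] x) * g x)
      = (∫ x : ℝ, F (T^[n] x) * g₀ x) + (∫ x : ℝ, F (T^[n] x) * h x) := by
    intro n
    rw [← integral_add (hint1 n) (hint2 n)]
    congr 1; funext x; rw [hh]; ring
  -- first term via mixing
  have hmix' := hmix F hF ⟨C, hC⟩ g₀ hg₀i (fun x hx => Set.indicator_of_notMem hx _)
  have hfirst : Tendsto (fun n : ℕ => ∫ x : ℝ, F (T^[n] x) * g₀ x) atTop
      (nhds ((∫ x in Set.Ico (0 : ℝ) 1, F x) * c)) := by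
    have heq : ∀ n : ℕ, (∫ x : ℝ, F (T^[n] x) * g₀ x)
        = ∫ x in Set.Ico (0:ℝ) 1, F ((fun y => Int.fract (T y))^[n] x) * g₀ x := by
      intro n
      have hind : (fun x => F (T^[n] x) * g₀ x)
          = Set.indicator (Set.Ico (0:ℝ) 1) (fun x => F (T^[n] x) * g₀ x) := by
        funext x
        by_cases hx : x ∈ Set.Ico (0:ℝ) 1
        · rw [Set.indicator_of_mem hx]
        · rw [Set.indicator_of_notMem hx, hg₀, Set.indicator_of_notMem hx, mul_zero]
      rw [hind, integral_indicator measurableSet_Ico]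
      apply setIntegral_congr_fun measurableSet_Ico
      intro x hx
      simp only
      rw [hiter n x hx, hFfract]
    rw [hg₀int] at hmix'
    exact hmix'.congr (fun n => (heq n).symm)
  have hsecond := hGLM1 F hF ⟨C, hC⟩ h hhi hhint
  have := hfirst.add hsecond
  rw [add_zero] at this
  exact this.congr (fun n => (hsplit n).symm)
end

section
/- Let T : ℝ → ℝ be a measure-preserving map of Lebesgue measure m that is translation-invariant (T(x+1) = T(x)+1) and Markov with respect to the partition {[j, j+1)}_{j∈ℤ} in the sense that the transfer operator P maps L¹(𝒜₀) to itself, where 𝒜₀ is the σ-algebra generated by {[j,j+1)}_{j∈ℤ}. Suppose that for every F₀ ∈ L^∞(𝒜₀) for which the limit m̄(F₀) := lim_{j→∞} (1/(2j)) ∫_{q−j}^{q+j} F₀ dx exists uniformly in q ∈ ℤ, one has ∫(F₀∘Tⁿ)g dm → m̄(F₀)·∫g dm for all g ∈ L¹(𝒜₀). Then for every F ∈ L^∞(ℝ) such that ρ(F) := lim_{M→∞} (1/(2M)) ∫_{a−M}^{a+M} F dx exists uniformly in a ∈ ℝ, and for g = 1_{[0,1)}, one has lim_{n→∞} ∫(F∘Tⁿ)g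 dm = ρ(F)·∫g dm, via the identity ∫(F∘Tⁿ)g dm = ∫ E(F|𝒜₀)·Pⁿg dm and ρ(F) = m̄(E(F|𝒜₀)). -/
open MeasureTheory Filter Topology

private lemma rwq_intOn {G : ℝ → ℝ} (hG : Measurable G) {C : ℝ} (hC : ∀ x, |G x| ≤ C)
    {s : Set ℝ} (hs : volume s ≠ ⊤) : IntegrableOn G s volume :=
  Measure.integrableOn_of_bounded hs hG.aestronglyMeasurable
    (Filter.Eventually.of_forall fun x => by simpa [Real.norm_eq_abs] using hC x)

private lemma rwq_sum_Ico (G : ℝ → ℝ) (hG : Measurable G) {C : ℝ} (hC : ∀ x, |G x| ≤ C)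
    (a : ℤ) (n : ℕ) :
    ∫ x in Set.Ico (a : ℝ) ((a : ℝ) + n), G x
      = ∑ i ∈ Finset.range n,
          ∫ x in Set.Ico (((a + i : ℤ)) : ℝ) (((a + i : ℤ) : ℝ) + 1), G x := by
  induction n with
  | zero => simp
  | succ n ih =>
      have hvol : ∀ b c : ℝ, volume (Set.Ico b c) ≠ ⊤ := by
        intro b c; rw [Real.volume_Ico]; exact ENNReal.ofReal_ne_top
      have h1 : (a : ℝ) ≤ (a : ℝ) + n := le_add_of_nonneg_right (by positivity)
      have h2 : (a : ℝ) + n ≤ (a : ℝ) + (n + 1 : ℕ) := by push_cast; linarith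
      have hunion : Set.Ico (a : ℝ) ((a : ℝ) + n) ∪
          Set.Ico ((a : ℝ) + n) ((a : ℝ) + (n + 1 : ℕ)) =
          Set.Ico (a : ℝ) ((a : ℝ) + (n + 1 : ℕ)) :=
        Set.Ico_union_Ico_eq_Ico h1 h2
      rw [← hunion, setIntegral_union (Set.Ico_disjoint_Ico_same) measurableSet_Ico
            (rwq_intOn hG hC (hvol _ _)) (rwq_intOn hG hC (hvol _ _)),
          ih, Finset.sum_range_succ]
      congr 1
      have e1 : ((a : ℝ) + n) = ((a + (n : ℤ) : ℤ) : ℝ) := by push_cast; ring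
      have e2 : ((a : ℝ) + ((n : ℕ) + 1 : ℕ)) = ((a + (n : ℤ) : ℤ) : ℝ) + 1 := by
        push_cast; ring
      rw [e1, e2]

private lemma rwq_decomp (f : ℝ → ℝ) (hf : Integrable f volume) :
    ∫ x, f x = ∑' k : ℤ, ∫ x in Set.Ico (k : ℝ) ((k : ℝ) + 1), f x := by
  have hU : (⋃ k : ℤ, Set.Ico (k : ℝ) ((k : ℝ) + 1)) = Set.univ := iUnion_Ico_intCast ℝ
  have hd : Pairwise (Function.onFun Disjoint fun k : ℤ => Set.Ico (k : ℝ) ((k : ℝ) + 1)) := by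
    intro k l hkl
    refine Set.Ico_disjoint_Ico.mpr ?_
    rcases lt_or_gt_of_ne hkl with h | h
    · have h' : (k : ℝ) + 1 ≤ (l : ℝ) := by exact_mod_cast h
      exact le_trans (min_le_left _ _) (le_trans h' (le_max_right _ _))
    · have h' : (l : ℝ) + 1 ≤ (k : ℝ) := by exact_mod_cast h
      exact le_trans (min_le_right _ _) (le_trans h' (le_max_left _ _))
  have := integral_iUnion (μ := volume) (f := f)
      (fun k : ℤ => measurableSet_Ico) hd (by rw [hU]; exact hf.integrableOn)
  rw [hU] at this
  simpa using this

/-- random walks: Let `T : ℝ → ℝ` preserve Lebesgue measure, be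
translation-invariant, and Markov w.r.t. the partition `{[j,j+1)}` in the sense that
its transfer operator `P` preserves `𝒜₀`-measurability (functions constant on each
`[j,j+1)`).  If every bounded `𝒜₀`-measurable `F₀` whose window averages
`(1/2j)∫_{q−j}^{q+j} F₀` converge uniformly in `q ∈ ℤ` satisfies
`∫(F₀∘Tⁿ)g → m̄(F₀)·∫g` for all `g ∈ L¹(𝒜₀)`, then every bounded measurable
`F : ℝ → ℝ` whose window averages `(1/2M)∫_{a−M}^{a+M} F` converge uniformly in
`a ∈ ℝ` satisfies `∫(F∘Tⁿ)·1_{[0,1)} dm → ρ(F)·∫1_{[0,1)} dm`. -/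
theorem random_walk_equilibrium
    (T : ℝ → ℝ) (hT : MeasurePreserving T volume volume)
    (htrans : ∀ x : ℝ, T (x + 1) = T x + 1)
    (P : (ℝ → ℝ) → (ℝ → ℝ))
    -- P is the Perron–Frobenius operator of T
    (hPdual : ∀ F : ℝ → ℝ, Measurable F → (∃ C, ∀ x, |F x| ≤ C) →
      ∀ g : ℝ → ℝ, Integrable g volume →
      (∫ x : ℝ, F (T x) * g x) = ∫ x : ℝ, F x * P g x)
    -- Markov property: P maps L¹(𝒜₀) to itself
    (hPMarkov : ∀ g : ℝ → ℝ, Integrable g volume →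
      (∀ j : ℤ, ∀ x ∈ Set.Ico (j : ℝ) ((j : ℝ) + 1),
        ∀ y ∈ Set.Ico (j : ℝ) ((j : ℝ) + 1), g x = g y) →
      Integrable (P g) volume ∧
      (∀ j : ℤ, ∀ x ∈ Set.Ico (j : ℝ) ((j : ℝ) + 1),
        ∀ y ∈ Set.Ico (j : ℝ) ((j : ℝ) + 1), P g x = P g y))
    -- hypothesis: convergence for 𝒜₀-measurable observables with uniform averages
    (hA0 : ∀ F₀ : ℝ → ℝ, Measurable F₀ → (∃ C, ∀ x, |F₀ x| ≤ C) →
      (∀ j : ℤ, ∀ x ∈ Set.Ico (j : ℝ) ((j : ℝ) + 1),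
        ∀ y ∈ Set.Ico (j : ℝ) ((j : ℝ) + 1), F₀ x = F₀ y) →
      ∀ mbar : ℝ,
      (∀ ε > 0, ∃ J : ℕ, ∀ q : ℤ, ∀ j : ℕ, J ≤ j → 0 < j →
        |(∫ x in Set.Icc ((q : ℝ) - j) ((q : ℝ) + j), F₀ x) / (2 * (j : ℝ)) - mbar| ≤ ε) →
      ∀ g : ℝ → ℝ, Integrable g volume →
      (∀ j : ℤ, ∀ x ∈ Set.Ico (j : ℝ) ((j : ℝ) + 1),
        ∀ y ∈ Set.Ico (j : ℝ) ((j : ℝ) + 1), g x = g y) →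
      Tendsto (fun n : ℕ => ∫ x : ℝ, F₀ (T^[n] x) * g x) atTop
        (nhds (mbar * ∫ x : ℝ, g x))) :
    -- conclusion: for general F with uniform window averages, tested on g = 1_{[0,1)}
    ∀ F : ℝ → ℝ, Measurable F → (∃ C, ∀ x, |F x| ≤ C) →
    ∀ ρF : ℝ,
    (∀ ε > 0, ∃ M₀ : ℝ, ∀ a : ℝ, ∀ M : ℝ, M₀ ≤ M → 0 < M →
      |(∫ x in Set.Icc (a - M) (a + M), F x) / (2 * M) - ρF| ≤ ε) →
    Tendsto
      (fun n : ℕ => ∫ x : ℝ, F (T^[n] x) *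
        (Set.Ico (0 : ℝ) 1).indicator (fun _ => (1 : ℝ)) x) atTop
      (nhds (ρF * ∫ x : ℝ, (Set.Ico (0 : ℝ) 1).indicator (fun _ => (1 : ℝ)) x)) := by
  intro F hFmeas hFbdd ρF hρ
  obtain ⟨C, hC⟩ := hFbdd
  have hvol : ∀ b c : ℝ, volume (Set.Ico b c) ≠ ⊤ := by
    intro b c; rw [Real.volume_Ico]; exact ENNReal.ofReal_ne_top
  -- floor facts
  have hfloor : ∀ (k : ℤ) (x : ℝ), x ∈ Set.Ico (k : ℝ) ((k : ℝ) + 1) → ⌊x⌋ = k := by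
    intro k x hx
    refine Int.floor_eq_iff.mpr ⟨hx.1, ?_⟩
    exact_mod_cast hx.2
  -- the conditional expectation F₀ = E(F | 𝒜₀)
  set c : ℤ → ℝ := fun k => ∫ x in Set.Ico (k : ℝ) ((k : ℝ) + 1), F x with hc_def
  set F₀ : ℝ → ℝ := fun x => c ⌊x⌋ with hF₀_def
  have hF₀meas : Measurable F₀ := by
    rw [hF₀_def]
    exact Measurable.comp (g := c) measurable_from_top Int.measurable_floor
  have hF₀val : ∀ (k : ℤ) (x : ℝ), x ∈ Set.Ico (k : ℝ) ((k : ℝ) + 1) → F₀ x = c k := by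
    intro k x hx; simp only [hF₀_def]; rw [hfloor k x hx]
  have hCnn : 0 ≤ C := le_trans (abs_nonneg _) (hC 0)
  have hF₀bdd : ∀ x, |F₀ x| ≤ C := by
    intro x
    have h1 : ‖∫ y in Set.Ico ((⌊x⌋ : ℝ)) ((⌊x⌋ : ℝ) + 1), F y‖ ≤
        C * (volume (Set.Ico ((⌊x⌋ : ℝ)) ((⌊x⌋ : ℝ) + 1))).toReal :=
      norm_setIntegral_le_of_norm_le_const (lt_top_iff_ne_top.mpr (hvol _ _))
        (fun y _ => by simpa [Real.norm_eq_abs] using hC y)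
    have h2 : (volume (Set.Ico ((⌊x⌋ : ℝ)) ((⌊x⌋ : ℝ) + 1))).toReal = 1 := by
      simp [Real.volume_Ico]
    rw [h2, mul_one] at h1
    simpa [hF₀_def, hc_def, Real.norm_eq_abs] using h1
  have hF₀A0 : ∀ j : ℤ, ∀ x ∈ Set.Ico (j : ℝ) ((j : ℝ) + 1),
      ∀ y ∈ Set.Ico (j : ℝ) ((j : ℝ) + 1), F₀ x = F₀ y := by
    intro j x hx y hy; rw [hF₀val j x hx, hF₀val j y hy]
  -- integral of F₀ over each cell equals integral of F
  have hcell : ∀ k : ℤ, (∫ x in Set.Ico (k : ℝ) ((k : ℝ) + 1), F₀ x)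
      = ∫ x in Set.Ico (k : ℝ) ((k : ℝ) + 1), F x := by
    intro k
    rw [setIntegral_congr_fun measurableSet_Ico (fun x hx => hF₀val k x hx),
        setIntegral_const]
    simp [Real.volume_Ico, hc_def]
  -- equality of window integrals over integer windows
  have hwin : ∀ (q : ℤ) (j : ℕ),
      (∫ x in Set.Icc ((q : ℝ) - j) ((q : ℝ) + j), F₀ x)
        = ∫ x in Set.Icc ((q : ℝ) - j) ((q : ℝ) + j), F x := by
    intro q j
    have e1 : ((q : ℝ) - j) = ((q - j : ℤ) : ℝ) := by push_cast; ring
    have e2 : ((q : ℝ) + j) = ((q - j : ℤ) : ℝ) + (2 * j : ℕ) := by push_cast; ring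
    rw [e1, e2, integral_Icc_eq_integral_Ico, integral_Icc_eq_integral_Ico,
        rwq_sum_Ico F hFmeas hC, rwq_sum_Ico F₀ hF₀meas hF₀bdd]
    exact Finset.sum_congr rfl fun i _ => hcell _
  -- uniform window averages for F₀
  have havg : ∀ ε > 0, ∃ J : ℕ, ∀ q : ℤ, ∀ j : ℕ, J ≤ j → 0 < j →
      |(∫ x in Set.Icc ((q : ℝ) - j) ((q : ℝ) + j), F₀ x) / (2 * (j : ℝ)) - ρF| ≤ ε := by
    intro ε hε
    obtain ⟨M₀, hM₀⟩ := hρ ε hε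
    refine ⟨⌈M₀⌉₊, fun q j hJ hj => ?_⟩
    rw [hwin q j]
    exact hM₀ (q : ℝ) (j : ℝ) (le_trans (Nat.le_ceil M₀) (by exact_mod_cast hJ))
      (by exact_mod_cast hj)
  -- the test function g
  set g : ℝ → ℝ := (Set.Ico (0 : ℝ) 1).indicator (fun _ => (1 : ℝ)) with hg_def
  have hg_int : Integrable g volume := by
    rw [hg_def]
    exact (integrable_indicator_iff measurableSet_Ico).mpr
      ((integrableOn_const_iff (C := (1 : ℝ))).mpr (Or.inr (lt_top_iff_ne_top.mpr (hvol 0 1))))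
  have hg_A0 : ∀ j : ℤ, ∀ x ∈ Set.Ico (j : ℝ) ((j : ℝ) + 1),
      ∀ y ∈ Set.Ico (j : ℝ) ((j : ℝ) + 1), g x = g y := by
    intro j x hx y hy
    by_cases hj : j = 0
    · subst hj
      have hx' : x ∈ Set.Ico (0 : ℝ) 1 := by simpa using hx
      have hy' : y ∈ Set.Ico (0 : ℝ) 1 := by simpa using hy
      simp [hg_def, Set.indicator_of_mem hx', Set.indicator_of_mem hy']
    · have hmem : ∀ z : ℝ, z ∈ Set.Ico (j : ℝ) ((j : ℝ) + 1) →
          z ∉ Set.Ico (0 : ℝ) 1 := by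
        intro z hz hzmem
        apply hj
        have h1 := hfloor j z hz
        have h2 := hfloor 0 z (by simpa using hzmem)
        omega
      simp [hg_def, Set.indicator_of_notMem (hmem x hx),
        Set.indicator_of_notMem (hmem y hy)]
  -- the swap lemma: ∫ F h = ∫ F₀ h for 𝒜₀-measurable integrable h
  have hswap : ∀ h : ℝ → ℝ, Integrable h volume →
      (∀ j : ℤ, ∀ x ∈ Set.Ico (j : ℝ) ((j : ℝ) + 1),
        ∀ y ∈ Set.Ico (j : ℝ) ((j : ℝ) + 1), h x = h y) →
      (∫ x, F x * h x) = ∫ x, F₀ x * h x := by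
    intro h hint hA0h
    have hFh : Integrable (fun x => F x * h x) volume :=
      hint.bdd_mul hFmeas.aestronglyMeasurable
        (Filter.Eventually.of_forall fun x => by simpa [Real.norm_eq_abs] using hC x)
    have hF₀h : Integrable (fun x => F₀ x * h x) volume :=
      hint.bdd_mul hF₀meas.aestronglyMeasurable
        (Filter.Eventually.of_forall fun x => by simpa [Real.norm_eq_abs] using hF₀bdd x)
    rw [rwq_decomp _ hFh, rwq_decomp _ hF₀h]
    refine tsum_congr fun k => ?_
    have hself : (k : ℝ) ∈ Set.Ico (k : ℝ) ((k : ℝ) + 1) := ⟨le_rfl, by linarith⟩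
    have hxk : ∀ x ∈ Set.Ico (k : ℝ) ((k : ℝ) + 1), h x = h k :=
      fun x hx => hA0h k x hx (k : ℝ) hself
    calc (∫ x in Set.Ico (k : ℝ) ((k : ℝ) + 1), F x * h x)
        = ∫ x in Set.Ico (k : ℝ) ((k : ℝ) + 1), F x * h (k : ℝ) :=
          setIntegral_congr_fun measurableSet_Ico (fun x hx => by rw [hxk x hx])
      _ = (∫ x in Set.Ico (k : ℝ) ((k : ℝ) + 1), F x) * h (k : ℝ) :=
          integral_mul_const _ _
      _ = (∫ x in Set.Ico (k : ℝ) ((k : ℝ) + 1), F₀ x) * h (k : ℝ) := by rw [hcell k]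
      _ = ∫ x in Set.Ico (k : ℝ) ((k : ℝ) + 1), F₀ x * h (k : ℝ) :=
          (integral_mul_const _ _).symm
      _ = ∫ x in Set.Ico (k : ℝ) ((k : ℝ) + 1), F₀ x * h x :=
          setIntegral_congr_fun measurableSet_Ico (fun x hx => by rw [hxk x hx])
  -- key iteration: duality for P^[n]
  have hkey : ∀ n : ℕ, ∀ h : ℝ → ℝ, Integrable h volume →
      (∀ j : ℤ, ∀ x ∈ Set.Ico (j : ℝ) ((j : ℝ) + 1),
        ∀ y ∈ Set.Ico (j : ℝ) ((j : ℝ) + 1), h x = h y) →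
      Integrable (P^[n] h) volume ∧
      (∀ j : ℤ, ∀ x ∈ Set.Ico (j : ℝ) ((j : ℝ) + 1),
        ∀ y ∈ Set.Ico (j : ℝ) ((j : ℝ) + 1), P^[n] h x = P^[n] h y) ∧
      (∀ G : ℝ → ℝ, Measurable G → (∃ C', ∀ x, |G x| ≤ C') →
        (∫ x, G (T^[n] x) * h x) = ∫ x, G x * P^[n] h x) := by
    intro n
    induction n with
    | zero => intro h hint hA0h; exact ⟨hint, hA0h, fun G _ _ => by simp⟩
    | succ n ih =>
        intro h hint hA0h
        obtain ⟨hPh_int, hPh_A0⟩ := hPMarkov h hint hA0h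
        obtain ⟨h1, h2, h3⟩ := ih (P h) hPh_int hPh_A0
        have hiter : P^[n + 1] h = P^[n] (P h) := Function.iterate_succ_apply P n h
        refine ⟨by rw [hiter]; exact h1, by rw [hiter]; exact h2, ?_⟩
        intro G hG ⟨C', hC'⟩
        have hGT : Measurable (fun x => G (T^[n] x)) := hG.comp (hT.measurable.iterate n)
        have step : (∫ x, G (T^[n + 1] x) * h x) = ∫ x, G (T^[n] x) * P h x := by
          have := hPdual (fun x => G (T^[n] x)) hGT ⟨C', fun x => hC' _⟩ h hint
          simpa [Function.iterate_succ_apply] using this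
        rw [step, h3 G hG ⟨C', hC'⟩, hiter]
  -- put it together
  have heq : ∀ n : ℕ, (∫ x, F (T^[n] x) * g x) = ∫ x, F₀ (T^[n] x) * g x := by
    intro n
    obtain ⟨h1, h2, h3⟩ := hkey n g hg_int hg_A0
    rw [h3 F hFmeas ⟨C, hC⟩, h3 F₀ hF₀meas ⟨C, hF₀bdd⟩, hswap _ h1 h2]
  have := hA0 F₀ hF₀meas ⟨C, hF₀bdd⟩ hF₀A0 ρF havg g hg_int hg_A0
  exact this.congr fun n => (heq n).symm
end
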